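/- arXiv:2307.03919 — 9 statements merged into one kernel-verified Lean document; each statement's English description precedes it below -/
import Mathlib

section
/- For every integer k ≥ 2, the polynomial Φ_k(x) = x^k - 2x^{k-1} - x^{k-2} - ⋯ - x - 1 has exactly one real root γ(k) with γ(k) > 1, and this root satisfies φ^2(1 - φ^{-k}) < γ(k) < φ^2, where φ = (1+√5)/2. -/
/-- Φ_k(x) = x^k - 2x^{k-1} - x^{k-2} - ⋯ - x - 1, the characteristic polynomial
of the k-generalized Pell sequence. -/
noncomputable def Phi (k : ℕ) (x : ℝ) : ℝ :=
  x ^ k - 2 * x ^ (k - 1) - ∑ i ∈ Finset.range (k - 1), x ^ i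

noncomputable def Qaux (k : ℕ) (t : ℝ) : ℝ :=
  1 - 2 * t - ∑ j ∈ Finset.range (k - 1), t ^ (j + 2)

lemma Qaux_anti (k : ℕ) {s t : ℝ} (hs : 0 ≤ s) (hst : s < t) : Qaux k t < Qaux k s := by
  unfold Qaux
  have hsum : ∑ j ∈ Finset.range (k-1), s^(j+2) ≤ ∑ j ∈ Finset.range (k-1), t^(j+2) :=
    Finset.sum_le_sum fun j _ => pow_le_pow_left₀ hs hst.le _
  linarith

lemma Phi_eq (k : ℕ) (hk : 2 ≤ k) (x : ℝ) (hx : 0 < x) :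
    Phi k x = x ^ k * Qaux k (1 / x) := by
  obtain ⟨m, rfl⟩ := Nat.exists_eq_add_of_le hk
  have hx0 : x ≠ 0 := ne_of_gt hx
  unfold Phi Qaux
  simp only [show 2 + m - 1 = m + 1 by omega]
  rw [mul_sub, mul_sub, mul_one, Finset.mul_sum]
  rw [← Finset.sum_range_reflect (fun i => x ^ i) (m+1)]
  congr 1
  · congr 1
    field_simp
    ring
  · apply Finset.sum_congr rfl
    intro j hj
    have hj' : j ≤ m := Nat.lt_succ_iff.mp (Finset.mem_range.mp hj)
    have hsplit : x ^ (2 + m) = x ^ (m + 1 - 1 - j) * x ^ (j + 2) := by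
      rw [← pow_add]; congr 1; omega
    rw [one_div, inv_pow, ← div_eq_mul_inv, hsplit, mul_div_assoc,
      div_self (pow_ne_zero _ hx0), mul_one]

lemma mul_Phi (k : ℕ) (hk : 2 ≤ k) (x : ℝ) :
    (x - 1) * Phi k x = x ^ (k - 1) * (x ^ 2 - 3 * x + 1) + 1 := by
  obtain ⟨m, rfl⟩ := Nat.exists_eq_add_of_le hk
  unfold Phi
  simp only [show 2 + m - 1 = m + 1 by omega]
  linear_combination (-(1:ℝ)) * geom_sum_mul x (m+1)

/-- For every k ≥ 2, Φ_k has exactly one real root γ with γ > 1, and this root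
satisfies φ²(1 - φ^{-k}) < γ < φ², where φ is the golden ratio. -/
theorem pell_char_poly_dominant_root (k : ℕ) (hk : 2 ≤ k) :
    (∃! γ : ℝ, 1 < γ ∧ Phi k γ = 0) ∧
      ∀ γ : ℝ, 1 < γ → Phi k γ = 0 →
        ((1 + Real.sqrt 5) / 2) ^ 2 * (1 - ((1 + Real.sqrt 5) / 2) ^ (-(k : ℤ))) < γ ∧
          γ < ((1 + Real.sqrt 5) / 2) ^ 2 := by
  set s : ℝ := Real.sqrt 5 with hsdef
  set φ : ℝ := (1 + s) / 2 with hφdef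
  set P : ℝ := (φ ^ k)⁻¹ with hP
  set c : ℝ := φ ^ 2 * P with hc
  set a : ℝ := φ ^ 2 - c with ha
  set b : ℝ := φ ^ 2 with hb
  clear_value a b c P φ s
  have hs2 : s ^ 2 = 5 := by rw [hsdef]; exact Real.sq_sqrt (by norm_num)
  have hsnn : 0 ≤ s := hsdef ▸ Real.sqrt_nonneg 5
  have hsgt : 2 < s := by nlinarith
  have hφ1 : 1 < φ := by rw [hφdef]; linarith
  have hφ0 : (0:ℝ) < φ := by linarith
  have hφsq : φ ^ 2 = φ + 1 := by rw [hφdef]; linear_combination hs2 / 4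
  have hφs : s = 2 * φ - 1 := by rw [hφdef]; ring
  have hφk : (0:ℝ) < φ ^ k := pow_pos hφ0 k
  have hk2 : φ ^ 2 ≤ φ ^ k := pow_le_pow_right₀ hφ1.le hk
  have hc0 : 0 < c := by rw [hc, hP, hb]; exact mul_pos (pow_pos hφ0 2) (inv_pos.mpr hφk)
  have hc1 : c ≤ 1 := by
    have : c = φ ^ 2 / φ ^ k := by rw [hc, hP, hb, div_eq_mul_inv]
    rw [this]
    exact (div_le_one hφk).mpr hk2
  have ha_ge : φ ≤ a := by rw [ha, hb]; linarith [hφsq]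
  have ha1 : 1 < a := lt_of_lt_of_le hφ1 ha_ge
  have hb1 : 1 < b := by rw [hb]; nlinarith
  have hab : a < b := by rw [ha]; linarith
  -- Phi at b is positive
  have hmul_b := mul_Phi k hk b
  have hbroot : b ^ 2 - 3 * b + 1 = 0 := by
    rw [hb]; linear_combination (φ ^ 2 + φ - 1) * hφsq
  have hPb : 0 < Phi k b := by
    rw [hbroot, mul_zero, zero_add] at hmul_b
    nlinarith [hmul_b]
  -- Phi at a is negative
  have hmul_a := mul_Phi k hk a
  have hfac : a ^ 2 - 3 * a + 1 = -(c * (s - c)) := by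
    rw [ha, hb]
    linear_combination (φ ^ 2 + φ - 1 - 2 * c) * hφsq + c * hφs
  have hkey : φ ^ (k - 1) * c = φ := by
    have h1 : φ ^ (k - 1) * φ ^ 2 = φ * φ ^ k := by
      rw [← pow_add, ← pow_succ']; congr 1; omega
    rw [hc, hP, hb, ← mul_assoc, h1, mul_assoc, mul_inv_cancel₀ hφk.ne', mul_one]
  have hφs1 : φ * (s - 1) = 2 := by
    linear_combination 2 * hφsq + φ * hφs
  have hbig : 2 ≤ a ^ (k - 1) * c * (s - c) := by
    have hmono : φ ^ (k - 1) ≤ a ^ (k - 1) := pow_le_pow_left₀ hφ0.le ha_ge _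
    have hanneg : (0:ℝ) ≤ a ^ (k - 1) := pow_nonneg (by linarith) _
    have t1 : φ ^ (k - 1) * c ≤ a ^ (k - 1) * c := mul_le_mul_of_nonneg_right hmono hc0.le
    have t2 : a ^ (k - 1) * c * (s - 1) ≤ a ^ (k - 1) * c * (s - c) :=
      mul_le_mul_of_nonneg_left (by linarith) (mul_nonneg hanneg hc0.le)
    have t3 : φ ^ (k - 1) * c * (s - 1) ≤ a ^ (k - 1) * c * (s - 1) :=
      mul_le_mul_of_nonneg_right t1 (by linarith)
    have t4 : φ ^ (k - 1) * c * (s - 1) = 2 := by rw [hkey]; exact hφs1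
    linarith
  have hPa : Phi k a < 0 := by
    rw [hfac] at hmul_a
    nlinarith [hmul_a, hbig]
  -- Qaux facts
  have ha0 : (0:ℝ) < a := by linarith
  have hb0 : (0:ℝ) < b := by linarith
  have hQb : 0 < Qaux k (1 / b) := by
    have h := Phi_eq k hk b hb0
    have hbk : (0:ℝ) < b ^ k := pow_pos hb0 k
    have h2 : Qaux k (1 / b) = Phi k b / b ^ k := by
      rw [h, mul_div_cancel_left₀ _ hbk.ne']
    rw [h2]; exact div_pos hPb hbk
  have hQa : Qaux k (1 / a) < 0 := by
    have h := Phi_eq k hk a ha0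
    have hak : (0:ℝ) < a ^ k := pow_pos ha0 k
    have h2 : Qaux k (1 / a) = Phi k a / a ^ k := by
      rw [h, mul_div_cancel_left₀ _ hak.ne']
    rw [h2]; exact div_neg_of_neg_of_pos hPa hak
  -- bounds for any root
  have hbound : ∀ γ : ℝ, 1 < γ → Phi k γ = 0 → a < γ ∧ γ < b := by
    intro γ hγ1 hγ0
    have hγpos : (0:ℝ) < γ := by linarith
    have hQγ : Qaux k (1 / γ) = 0 := by
      have h := Phi_eq k hk γ hγpos
      rw [hγ0] at h
      have := (mul_eq_zero.mp h.symm).resolve_left (pow_ne_zero k hγpos.ne')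
      exact this
    constructor
    · by_contra hle
      push_neg at hle
      have h1 : 1 / a ≤ 1 / γ := one_div_le_one_div_of_le hγpos hle
      rcases lt_or_eq_of_le h1 with h | h
      · have := Qaux_anti k (by positivity) h
        rw [hQγ] at this
        linarith
      · rw [← h] at hQγ
        linarith
    · by_contra hle
      push_neg at hle
      have h1 : 1 / γ ≤ 1 / b := one_div_le_one_div_of_le hb0 hle
      rcases lt_or_eq_of_le h1 with h | h
      · have := Qaux_anti k (by positivity) h
        rw [hQγ] at this
        linarith
      · rw [h] at hQγ
        linarith
  -- uniqueness helper
  have huniq : ∀ x y : ℝ, 1 < x → Phi k x = 0 → 1 < y → Phi k y = 0 → x = y := by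
    intro x y hx1 hx0 hy1 hy0
    have hxpos : (0:ℝ) < x := by linarith
    have hypos : (0:ℝ) < y := by linarith
    have hQx : Qaux k (1 / x) = 0 := by
      have h := Phi_eq k hk x hxpos
      rw [hx0] at h
      exact (mul_eq_zero.mp h.symm).resolve_left (pow_ne_zero k hxpos.ne')
    have hQy : Qaux k (1 / y) = 0 := by
      have h := Phi_eq k hk y hypos
      rw [hy0] at h
      exact (mul_eq_zero.mp h.symm).resolve_left (pow_ne_zero k hypos.ne')
    rcases lt_trichotomy x y with h | h | h
    · exfalso
      have h1 : 1 / y < 1 / x := one_div_lt_one_div_of_lt hxpos h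
      have := Qaux_anti k (by positivity) h1
      rw [hQx, hQy] at this
      exact lt_irrefl 0 this
    · exact h
    · exfalso
      have h1 : 1 / x < 1 / y := one_div_lt_one_div_of_lt hypos h
      have := Qaux_anti k (by positivity) h1
      rw [hQx, hQy] at this
      exact lt_irrefl 0 this
  -- existence via IVT
  have hcont : Continuous (Phi k) := by
    unfold Phi
    exact ((continuous_pow k).sub (continuous_const.mul (continuous_pow (k-1)))).sub
      (continuous_finset_sum _ fun i _ => continuous_pow i)
  obtain ⟨γ, hγmem, hγ0⟩ :=
    intermediate_value_Icc hab.le hcont.continuousOn ⟨hPa.le, hPb.le⟩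
  have hγ1 : 1 < γ := lt_of_lt_of_le ha1 hγmem.1
  constructor
  · exact ⟨γ, ⟨hγ1, hγ0⟩, fun y hy => huniq y γ hy.1 hy.2 hγ1 hγ0⟩
  · intro δ hδ1 hδ0
    obtain ⟨hlo, hhi⟩ := hbound δ hδ1 hδ0
    have hz : φ ^ (-(k : ℤ)) = P := by
      rw [hP, ← zpow_natCast φ k, ← zpow_neg]
    constructor
    · have heq : b * (1 - φ ^ (-(k : ℤ))) = a := by
        rw [hz, ha, hc]; ring
      rw [heq]; exact hlo
    · exact hhi
end

section
/- For every integer k ≥ 2 and every integer n ≥ 1, the k-generalized Pell number satisfies γ^(n-2) ≤ P_n^(k) ≤ γ^(n-1), where γ = γ(k) is the dominant root of the characteristic polynomial of the k-generalized Pell sequence. -/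
/-- `IsGenPell k P` says that `P : ℤ → ℤ` is the k-generalized Pell sequence:
P_{-(k-2)} = ⋯ = P_0 = 0, P_1 = 1 and
P_n = 2P_{n-1} + P_{n-2} + ⋯ + P_{n-k} for n ≥ 2. -/
def IsGenPell (k : ℕ) (P : ℤ → ℤ) : Prop :=
  (∀ n : ℤ, 2 - (k : ℤ) ≤ n → n ≤ 0 → P n = 0) ∧ P 1 = 1 ∧
    ∀ n : ℤ, 2 ≤ n → P n = 2 * P (n - 1) + ∑ i ∈ Finset.Icc 2 k, P (n - (i : ℤ))

lemma gamma_gt_two (k : ℕ) (hk : 2 ≤ k) (γ : ℝ) (hγ1 : 1 < γ) (hγ : Phi k γ = 0) :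
    2 < γ := by
  have h0 : (0:ℝ) < γ := by linarith
  have hS : (1:ℝ) ≤ ∑ i ∈ Finset.range (k - 1), γ ^ i := by
    have h01 : (0:ℕ) ∈ Finset.range (k-1) := by
      simp; omega
    have := Finset.single_le_sum (f := fun i => γ ^ i)
      (fun i _ => le_of_lt (pow_pos h0 i)) h01
    simpa using this
  have hid : γ ^ k - 2 * γ ^ (k-1) = ∑ i ∈ Finset.range (k - 1), γ ^ i := by
    unfold Phi at hγ; linarith
  have hpow : γ ^ k = γ ^ (k-1) * γ := by
    rw [← pow_succ]; congr 1; omega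
  nlinarith [pow_pos h0 (k-1)]

lemma char_id (k : ℕ) (hk : 2 ≤ k) (γ : ℝ) (hγ1 : 1 < γ) (hγ : Phi k γ = 0) (m : ℤ) :
    γ ^ m = 2 * γ ^ (m - 1) + ∑ i ∈ Finset.Icc 2 k, γ ^ (m - (i:ℤ)) := by
  have h0 : (0:ℝ) < γ := by linarith
  have hne : γ ≠ 0 := ne_of_gt h0
  have hnat : γ ^ k = 2 * γ ^ (k-1) + ∑ i ∈ Finset.range (k - 1), γ ^ i := by
    unfold Phi at hγ; linarith
  have hsum : ∑ i ∈ Finset.Icc 2 k, γ ^ (m - (i:ℤ))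
      = γ ^ (m - (k:ℤ)) * ∑ i ∈ Finset.range (k - 1), γ ^ i := by
    rw [← Finset.Ico_add_one_right_eq_Icc, Finset.sum_Ico_eq_sum_range]
    have hk1 : k + 1 - 2 = k - 1 := by omega
    rw [hk1]
    rw [← Finset.sum_range_reflect (fun j => γ ^ (m - ((2 + j : ℕ) : ℤ))) (k-1)]
    rw [Finset.mul_sum]
    refine Finset.sum_congr rfl (fun j hj => ?_)
    have hj' : j < k - 1 := Finset.mem_range.mp hj
    have he : m - ((2 + (k - 1 - 1 - j) : ℕ) : ℤ) = (m - (k:ℤ)) + (j:ℤ) := by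
      have : ((2 + (k - 1 - 1 - j) : ℕ) : ℤ) = (k:ℤ) - (j:ℤ) := by
        push_cast [Nat.cast_sub]; omega
      omega
    rw [he, zpow_add₀ hne, zpow_natCast]
  rw [hsum]
  have e1 : γ ^ m = γ ^ (m - (k:ℤ)) * γ ^ k := by
    rw [← zpow_natCast γ k, ← zpow_add₀ hne]; congr 1; ring
  have e2 : γ ^ (m - 1) = γ ^ (m - (k:ℤ)) * γ ^ (k-1) := by
    rw [← zpow_natCast γ (k-1), ← zpow_add₀ hne]
    congr 1
    have : ((k - 1 : ℕ) : ℤ) = (k:ℤ) - 1 := by omega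
    omega
  rw [e1, e2, hnat]; ring

/-- For k ≥ 2 and n ≥ 1, γ^(n-2) ≤ P_n^(k) ≤ γ^(n-1), where γ is the dominant
root of the characteristic polynomial. -/
theorem genPell_growth (k : ℕ) (hk : 2 ≤ k) (P : ℤ → ℤ) (hP : IsGenPell k P)
    (γ : ℝ) (hγ1 : 1 < γ) (hγ : Phi k γ = 0) (n : ℤ) (hn : 1 ≤ n) :
    γ ^ (n - 2) ≤ (P n : ℝ) ∧ (P n : ℝ) ≤ γ ^ (n - 1) := by
  have h2γ : 2 < γ := gamma_gt_two k hk γ hγ1 hγ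
  have h0 : (0:ℝ) < γ := by linarith
  have hne : γ ≠ 0 := ne_of_gt h0
  obtain ⟨hzero, hone, hrec⟩ := hP
  have main : ∀ N : ℕ, ∀ n : ℤ, 1 ≤ n → n ≤ (N:ℤ) →
      γ ^ (n - 2) ≤ (P n : ℝ) ∧ (P n : ℝ) ≤ γ ^ (n - 1) := by
    intro N
    induction N with
    | zero => intro n h1 h2; omega
    | succ N ih =>
      intro n h1 h2
      by_cases hsm : n ≤ (N:ℤ)
      · exact ih n h1 hsm
      have hnN : n = (N:ℤ) + 1 := by omega
      -- case n = 1
      by_cases hn1 : n = 1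
      · subst hn1
        rw [hone]
        refine ⟨?_, ?_⟩
        · have h := zpow_le_one_of_nonpos₀ (le_of_lt hγ1) (by norm_num : (1:ℤ)-2 ≤ 0)
          exact_mod_cast h
        · simp
      have hn2 : 2 ≤ n := by omega
      have hrecR : (P n : ℝ) = 2 * ((P (n-1) : ℤ) : ℝ)
          + ∑ i ∈ Finset.Icc 2 k, ((P (n - (i:ℤ)) : ℤ) : ℝ) := by
        have := hrec n hn2
        exact_mod_cast congrArg (fun z : ℤ => (z : ℝ)) this
      have ihprev := ih (n-1) (by omega) (by omega)
      constructor
      · -- lower bound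
        by_cases hn2' : n = 2
        · subst hn2'
          have hs0 : ∑ i ∈ Finset.Icc 2 k, ((P (2 - (i:ℤ)) : ℤ) : ℝ) = 0 := by
            refine Finset.sum_eq_zero (fun i hi => ?_)
            obtain ⟨hi1, hi2⟩ := Finset.mem_Icc.mp hi
            have : P (2 - (i:ℤ)) = 0 := hzero _ (by omega) (by omega)
            rw [this]; norm_num
          rw [hrecR, hs0]
          norm_num
          rw [hone]
          norm_num
        have hn3 : 3 ≤ n := by omega
        have key : ∑ i ∈ Finset.Icc 2 k, γ ^ (n - 2 - (i:ℤ))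
            ≤ ∑ i ∈ Finset.Icc 2 k, ((P (n - (i:ℤ)) : ℤ) : ℝ) := by
          by_cases hbig : (k:ℤ) + 2 ≤ n
          · refine Finset.sum_le_sum (fun i hi => ?_)
            obtain ⟨hi1, hi2⟩ := Finset.mem_Icc.mp hi
            have := (ih (n - i) (by omega) (by omega)).1
            calc γ ^ (n - 2 - (i:ℤ)) = γ ^ (n - (i:ℤ) - 2) := by ring_nf
              _ ≤ _ := this
          · -- 3 ≤ n ≤ k + 1
            set c : ℕ := (n-1).toNat with hc
            have hcZ : (c:ℤ) = n - 1 := by omega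
            have hc2 : 2 ≤ c := by omega
            have hck : c ≤ k := by omega
            have hsplitγ := Finset.sum_Ico_consecutive
              (fun i : ℕ => γ ^ (n - 2 - (i:ℤ))) (by omega : 2 ≤ c) (by omega : c ≤ k + 1)
            have hsplitP := Finset.sum_Ico_consecutive
              (fun i : ℕ => ((P (n - (i:ℤ)) : ℤ) : ℝ)) (by omega : 2 ≤ c) (by omega : c ≤ k + 1)
            rw [← Finset.Ico_add_one_right_eq_Icc, ← hsplitγ, ← hsplitP]
            have hA : ∑ i ∈ Finset.Ico 2 c, γ ^ (n - 2 - (i:ℤ))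
                ≤ ∑ i ∈ Finset.Ico 2 c, ((P (n - (i:ℤ)) : ℤ) : ℝ) := by
              refine Finset.sum_le_sum (fun i hi => ?_)
              obtain ⟨hi1, hi2⟩ := Finset.mem_Ico.mp hi
              have := (ih (n - i) (by omega) (by omega)).1
              calc γ ^ (n - 2 - (i:ℤ)) = γ ^ (n - (i:ℤ) - 2) := by ring_nf
                _ ≤ _ := this
            have hBP : ∑ i ∈ Finset.Ico c (k+1), ((P (n - (i:ℤ)) : ℤ) : ℝ) = 1 := by
              have hmem : c ∈ Finset.Ico c (k+1) := Finset.mem_Ico.mpr ⟨le_refl _, by omega⟩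
              rw [Finset.sum_eq_single_of_mem c hmem]
              · have : n - (c:ℤ) = 1 := by omega
                rw [this, hone]; norm_num
              · intro b hb hbne
                obtain ⟨hb1, hb2⟩ := Finset.mem_Ico.mp hb
                have hb1' : c + 1 ≤ b := by omega
                have : P (n - (b:ℤ)) = 0 := hzero _ (by omega) (by omega)
                rw [this]; norm_num
            have hBγ : ∑ i ∈ Finset.Ico c (k+1), γ ^ (n - 2 - (i:ℤ)) ≤ 1 := by
              rw [Finset.sum_Ico_eq_sum_range]
              have hstep : ∀ j ∈ Finset.range (k + 1 - c),
                  γ ^ (n - 2 - ((c + j : ℕ):ℤ)) ≤ (1/2:ℝ) ^ j * (1/2) := by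
                intro j hj
                have he : n - 2 - ((c + j : ℕ):ℤ) = -(((j+1 : ℕ)):ℤ) := by push_cast; omega
                rw [he, zpow_neg, zpow_natCast, ← inv_pow]
                have h1 : (γ⁻¹) ^ (j+1) ≤ (1/2:ℝ) ^ (j+1) := by
                  apply pow_le_pow_left₀ (by positivity)
                  rw [inv_le_comm₀ h0 (by norm_num)]
                  linarith
                calc (γ⁻¹) ^ (j+1) ≤ (1/2:ℝ) ^ (j+1) := h1
                  _ = (1/2:ℝ) ^ j * (1/2) := by rw [pow_succ]
              calc ∑ j ∈ Finset.range (k + 1 - c), γ ^ (n - 2 - ((c + j : ℕ):ℤ))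
                  ≤ ∑ j ∈ Finset.range (k + 1 - c), (1/2:ℝ) ^ j * (1/2) :=
                    Finset.sum_le_sum hstep
                _ = (∑ j ∈ Finset.range (k + 1 - c), (1/2:ℝ) ^ j) * (1/2) := by
                    rw [Finset.sum_mul]
                _ ≤ 2 * (1/2) := by
                    have := sum_geometric_two_le (k + 1 - c)
                    linarith
                _ = 1 := by norm_num
            calc ∑ i ∈ Finset.Ico 2 c, γ ^ (n - 2 - (i:ℤ))
                  + ∑ i ∈ Finset.Ico c (k+1), γ ^ (n - 2 - (i:ℤ))
                ≤ ∑ i ∈ Finset.Ico 2 c, ((P (n - (i:ℤ)) : ℤ) : ℝ) + 1 := by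
                  exact add_le_add hA hBγ
              _ = _ := by rw [hBP]
        have hchar := char_id k hk γ hγ1 hγ (n - 2)
        have hprev : γ ^ (n - 3) ≤ ((P (n-1) : ℤ) : ℝ) := by
          calc γ ^ (n-3) = γ ^ (n - 1 - 2) := by ring_nf
            _ ≤ _ := ihprev.1
        calc γ ^ (n - 2) = 2 * γ ^ (n - 2 - 1) + ∑ i ∈ Finset.Icc 2 k, γ ^ (n - 2 - (i:ℤ)) :=
              hchar
          _ = 2 * γ ^ (n - 3) + ∑ i ∈ Finset.Icc 2 k, γ ^ (n - 2 - (i:ℤ)) := by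
              rw [show n - 2 - 1 = n - 3 by ring]
          _ ≤ 2 * ((P (n-1) : ℤ) : ℝ) + ∑ i ∈ Finset.Icc 2 k, ((P (n - (i:ℤ)) : ℤ) : ℝ) := by
              have := mul_le_mul_of_nonneg_left hprev (by norm_num : (0:ℝ) ≤ 2)
              exact add_le_add this key
          _ = (P n : ℝ) := hrecR.symm
      · -- upper bound
        have key : ∑ i ∈ Finset.Icc 2 k, ((P (n - (i:ℤ)) : ℤ) : ℝ)
            ≤ ∑ i ∈ Finset.Icc 2 k, γ ^ (n - 1 - (i:ℤ)) := by
          refine Finset.sum_le_sum (fun i hi => ?_)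
          obtain ⟨hi1, hi2⟩ := Finset.mem_Icc.mp hi
          by_cases hpos : 1 ≤ n - i
          · have := (ih (n - i) hpos (by omega)).2
            calc ((P (n - (i:ℤ)) : ℤ) : ℝ) ≤ γ ^ (n - (i:ℤ) - 1) := this
              _ = γ ^ (n - 1 - (i:ℤ)) := by ring_nf
          · have : P (n - (i:ℤ)) = 0 := hzero _ (by omega) (by omega)
            rw [this]
            exact_mod_cast le_of_lt (zpow_pos h0 _)
        have hchar := char_id k hk γ hγ1 hγ (n - 1)
        calc (P n : ℝ) = 2 * ((P (n-1) : ℤ) : ℝ)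
              + ∑ i ∈ Finset.Icc 2 k, ((P (n - (i:ℤ)) : ℤ) : ℝ) := hrecR
          _ ≤ 2 * γ ^ (n - 2) + ∑ i ∈ Finset.Icc 2 k, γ ^ (n - 1 - (i:ℤ)) := by
              have h1 : ((P (n-1) : ℤ) : ℝ) ≤ γ ^ (n - 2) := by
                calc ((P (n-1) : ℤ) : ℝ) ≤ γ ^ (n - 1 - 1) := ihprev.2
                  _ = γ ^ (n - 2) := by ring_nf
              exact add_le_add (mul_le_mul_of_nonneg_left h1 (by norm_num)) key
          _ = 2 * γ ^ (n - 1 - 1) + ∑ i ∈ Finset.Icc 2 k, γ ^ (n - 1 - (i:ℤ)) := by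
              rw [show n - 1 - 1 = n - 2 by ring]
          _ = γ ^ (n - 1) := hchar.symm
  exact main n.toNat n hn (by omega)
end

section
/- For every integer k ≥ 2 and every integer n with 1 ≤ n ≤ k+1, the k-generalized Pell number satisfies P_n^(k) = F_{2n-1}, where F denotes the Fibonacci sequence. -/
lemma genPell_sum_shift (k : ℕ) (hk : 2 ≤ k) (P : ℤ → ℤ) (n : ℤ) :
    ∑ i ∈ Finset.Icc 2 k, P (n + 1 - (i : ℤ)) =
      P (n - 1) + (∑ i ∈ Finset.Icc 2 k, P (n - (i : ℤ))) - P (n - (k : ℤ)) := by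
  have h1 : ∀ m : ℤ, ∑ i ∈ Finset.Icc 2 k, P (m - (i : ℤ)) =
      ∑ j ∈ Finset.range (k - 1), P (m - 2 - (j : ℤ)) := by
    intro m
    rw [show Finset.Icc 2 k = Finset.Ico 2 (k + 1) by rw [Finset.Ico_add_one_right_eq_Icc],
      Finset.sum_Ico_eq_sum_range]
    apply Finset.sum_congr
    · congr 1
    · intro j _; congr 1; push_cast; ring
  rw [h1, h1]
  obtain ⟨t, ht⟩ : ∃ t, k - 1 = t + 1 := ⟨k - 2, by omega⟩
  rw [ht, Finset.sum_range_succ', Finset.sum_range_succ]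
  have hfirst : P (n + 1 - 2 - ((0 : ℕ) : ℤ)) = P (n - 1) := by congr 1; push_cast; ring
  have hlast : P (n - 2 - (t : ℤ)) = P (n - (k : ℤ)) := by
    congr 1
    have : (k : ℤ) = (t : ℤ) + 2 := by
      have := ht; push_cast; omega
    omega
  have hbody : ∀ j ∈ Finset.range t, P (n + 1 - 2 - ((j : ℕ) + 1 : ℕ)) = P (n - 2 - (j : ℤ)) := by
    intro j _; congr 1; push_cast; ring
  rw [Finset.sum_congr rfl hbody, hfirst, hlast]
  ring

lemma genPell_rec3 (k : ℕ) (hk : 2 ≤ k) (P : ℤ → ℤ) (hP : IsGenPell k P)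
    (n : ℕ) (h2 : 2 ≤ n) (hnk : n ≤ k) :
    P ((n : ℤ) + 1) = 3 * P (n : ℤ) - P ((n : ℤ) - 1) := by
  obtain ⟨h0, h1, hrec⟩ := hP
  have e1 := hrec ((n : ℤ) + 1) (by exact_mod_cast by omega)
  have e2 := hrec (n : ℤ) (by exact_mod_cast h2)
  have e3 := genPell_sum_shift k hk P (n : ℤ)
  have e4 : P ((n : ℤ) - (k : ℤ)) = 0 := h0 _ (by push_cast; omega) (by push_cast; omega)
  have e5 : (n : ℤ) + 1 - 1 = (n : ℤ) := by ring
  rw [e5] at e1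
  rw [e1, e3, e4, e2]
  ring

/-- For k ≥ 2 and 1 ≤ n ≤ k + 1, P_n^(k) = F_{2n-1}. -/
theorem genPell_eq_fib (k : ℕ) (hk : 2 ≤ k) (P : ℤ → ℤ) (hP : IsGenPell k P)
    (n : ℕ) (hn1 : 1 ≤ n) (hn2 : n ≤ k + 1) :
    P (n : ℤ) = Nat.fib (2 * n - 1) := by
  induction n using Nat.strong_induction_on with
  | _ n ih =>
    match n, hn1 with
    | 1, _ => simpa using hP.2.1
    | 2, _ =>
      have e := hP.2.2 2 le_rfl
      have hz : ∀ i ∈ Finset.Icc 2 k, P ((2 : ℤ) - (i : ℤ)) = 0 := by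
        intro i hi
        simp only [Finset.mem_Icc] at hi
        exact hP.1 _ (by omega) (by omega)
      rw [Finset.sum_eq_zero hz] at e
      norm_num [e, hP.2.1]
    | (m + 2) + 1, _ =>
      have hm2 : 2 ≤ m + 2 := by omega
      have hmk : m + 2 ≤ k := by omega
      have hrec := genPell_rec3 k hk P hP (m + 2) hm2 hmk
      have ih1 : P ((m + 2 : ℕ) : ℤ) = Nat.fib (2 * (m + 2) - 1) :=
        ih (m + 2) (by omega) (by omega) (by omega)
      have ih2 : P ((m + 1 : ℕ) : ℤ) = Nat.fib (2 * (m + 1) - 1) :=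
        ih (m + 1) (by omega) (by omega) (by omega)
      have c1 : ((m + 2 : ℕ) : ℤ) + 1 = ((m + 3 : ℕ) : ℤ) := by push_cast; ring
      have c2 : ((m + 2 : ℕ) : ℤ) - 1 = ((m + 1 : ℕ) : ℤ) := by push_cast; ring
      rw [c1, c2] at hrec
      have hfib : (Nat.fib (2 * (m + 3) - 1) : ℤ) =
          3 * Nat.fib (2 * (m + 2) - 1) - Nat.fib (2 * (m + 1) - 1) := by
        have e1 : 2 * (m + 3) - 1 = (2 * m + 1) + 4 := by omega
        have e2 : 2 * (m + 2) - 1 = (2 * m + 1) + 2 := by omega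
        have e3 : 2 * (m + 1) - 1 = 2 * m + 1 := by omega
        rw [e1, e2, e3]
        have f1 := Nat.fib_add_two (n := 2 * m + 1)
        have f2 := Nat.fib_add_two (n := 2 * m + 2)
        have f3 := Nat.fib_add_two (n := 2 * m + 3)
        have h4 : (2 * m + 1) + 4 = (2 * m + 3) + 2 := by omega
        have h5 : (2 * m + 1) + 2 = 2 * m + 3 := by omega
        rw [h4, h5, f3, f2, f1]
        push_cast
        ring
      show P ((m + 3 : ℕ) : ℤ) = _
      rw [hrec, ih1, ih2, hfib]
end

section
/- For every integer k ≥ 2, let γ = γ(k) be the dominant real root of x^k - 2x^{k-1} - ⋯ - x - 1 and let g_k(z) = (z-1)/((k+1)z^2 - 3kz + k - 1). Then 0.276 < g_k(γ) < 0.5. -/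
/-- For k ≥ 2 and γ the dominant root of Φ_k, with
g_k(z) = (z-1)/((k+1)z² - 3kz + k - 1), we have 0.276 < g_k(γ) < 0.5. -/
theorem g_k_bounds (k : ℕ) (hk : 2 ≤ k) (γ : ℝ) (hγ1 : 1 < γ) (hγ : Phi k γ = 0) :
    0.276 < (γ - 1) / ((k + 1) * γ ^ 2 - 3 * k * γ + k - 1) ∧
      (γ - 1) / ((k + 1) * γ ^ 2 - 3 * k * γ + k - 1) < 0.5 := by
  obtain ⟨n, rfl⟩ : ∃ n, k = n + 1 := ⟨k - 1, by omega⟩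
  have hn : 1 ≤ n := by omega
  simp only [Phi, Nat.add_sub_cancel] at hγ
  have hgs := geom_sum_mul γ n
  have hs : γ ^ (n + 1) = γ ^ n * γ := pow_succ γ n
  rw [hs] at hγ
  have key : γ ^ n * (γ ^ 2 - 3 * γ + 1) = -1 := by
    linear_combination (γ - 1) * hγ + hgs
  have ht0 : (0:ℝ) < γ ^ n := by positivity
  have htγ : γ ≤ γ ^ n := by
    calc γ = γ ^ 1 := (pow_one γ).symm
    _ ≤ γ ^ n := pow_le_pow_right₀ hγ1.le hn
  -- γ > 2
  have hγ2 : 2 < γ := by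
    by_contra h
    push_neg at h
    have hq : (0:ℝ) ≤ γ ^ n * ((γ - 1) * (2 - γ)) :=
      mul_nonneg ht0.le (mul_nonneg (by linarith) (by linarith))
    nlinarith [key, htγ, hq]
  -- γ < 2.62
  have hγ262 : γ < 2.62 := by
    by_contra h
    push_neg at h
    have hq0 : (0:ℝ) < γ ^ 2 - 3 * γ + 1 := by nlinarith
    nlinarith [mul_pos ht0 hq0, key]
  set K : ℝ := ((n:ℝ) + 1) with hK
  have hKcast : ((n + 1 : ℕ) : ℝ) = K := by push_cast [hK]; ring
  rw [hKcast]
  have hKpos : 0 < K := by positivity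
  -- 2^n bound:  K ≤ 2^n < γ^n
  have h2n : (2:ℝ) ^ n < γ ^ n := by
    exact pow_lt_pow_left₀ hγ2 (by norm_num) (by omega)
  have hKle : K ≤ (2:ℝ) ^ n := by
    have : n + 1 ≤ 2 ^ n := @Nat.lt_two_pow_self n
    calc K = ((n + 1 : ℕ) : ℝ) := by push_cast [hK]; ring
    _ ≤ ((2 ^ n : ℕ) : ℝ) := by exact_mod_cast this
    _ = (2:ℝ) ^ n := by push_cast; ring
  -- main inequality (A): K < γ^n * (γ-1)^2
  have hA : K < γ ^ n * (γ - 1) ^ 2 := by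
    have hsq : 1 < (γ - 1) ^ 2 := by nlinarith
    nlinarith [mul_lt_mul_of_pos_left hsq ht0]
  -- express the quadratic term via key
  have h1 : K * (γ ^ 2 - 3 * γ + 1) = -K / γ ^ n := by
    rw [eq_div_iff ht0.ne']
    linear_combination K * key
  have h2 : -((γ - 1) ^ 2) < -K / γ ^ n := by
    have : K / γ ^ n < (γ - 1) ^ 2 := (div_lt_iff₀ ht0).mpr (by nlinarith [hA])
    linarith [neg_lt_neg this, (neg_div (γ ^ n) K)]
  have hexp : (K + 1) * γ ^ 2 - 3 * K * γ + K - 1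
      = (γ ^ 2 - 1) + K * (γ ^ 2 - 3 * γ + 1) := by ring
  have hid : γ ^ 2 - 1 - (γ - 1) ^ 2 = 2 * γ - 2 := by ring
  have hD2 : 2 * (γ - 1) < (K + 1) * γ ^ 2 - 3 * K * γ + K - 1 := by
    rw [hexp, h1]; linarith
  have hDpos : 0 < (K + 1) * γ ^ 2 - 3 * K * γ + K - 1 := by linarith
  constructor
  · rw [lt_div_iff₀ hDpos]
    have hKt : 0 < K / γ ^ n := div_pos hKpos ht0
    have hDlt : (K + 1) * γ ^ 2 - 3 * K * γ + K - 1 < γ ^ 2 - 1 := by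
      rw [hexp, h1, neg_div]; linarith
    nlinarith [mul_pos (sub_pos.mpr hγ1) (sub_pos.mpr hγ262)]
  · rw [div_lt_iff₀ hDpos]
    linarith
end

section
/- If integers n ≥ k+2, k ≥ 2 and m ≥ 0 satisfy P_n^(k) = N_m, then 1.25n − 1.5 < m < 2.52n − 0.52. -/
/-- The Narayana's cows sequence. -/
def narayana : ℕ → ℕ
  | 0 => 1
  | 1 => 1
  | 2 => 1
  | m + 3 => narayana (m + 2) + narayana m

lemma nar_ub (m : ℕ) : (narayana m : ℝ) ≤ (3/2)^m := by
  induction m using Nat.strong_induction_on with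
  | _ m ih =>
    match m with
    | 0 => norm_num [narayana]
    | 1 => norm_num [narayana]
    | 2 => norm_num [narayana]
    | m+3 =>
      have h1 := ih (m+2) (by omega)
      have h2 := ih m (by omega)
      have hp : (0:ℝ) < (3/2)^m := by positivity
      have e2 : ((3:ℝ)/2)^(m+2) = (3/2)^m * (9/4) := by rw [pow_add]; norm_num
      have e3 : ((3:ℝ)/2)^(m+3) = (3/2)^m * (27/8) := by rw [pow_add]; norm_num
      have hval : (narayana (m+3) : ℝ) = narayana (m+2) + narayana m := by
        rw [narayana]; push_cast; ring
      rw [hval, e3]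
      rw [e2] at h1
      linarith

lemma nar_lb (m : ℕ) : ((2931:ℝ)/2000)^m ≤ (narayana (m+2) : ℝ) := by
  induction m using Nat.strong_induction_on with
  | _ m ih =>
    match m with
    | 0 => norm_num [show narayana 2 = 1 from rfl]
    | 1 => norm_num [show narayana 3 = 2 from rfl]
    | 2 => norm_num [show narayana 4 = 3 from rfl]
    | m+3 =>
      have h1 := ih (m+2) (by omega)
      have h2 := ih m (by omega)
      have hp : (0:ℝ) < (2931/2000:ℝ)^m := by positivity
      have e2 : ((2931:ℝ)/2000)^(m+2) = (2931/2000:ℝ)^m * ((2931/2000)^2) := by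
        rw [pow_add]
      have e3 : ((2931:ℝ)/2000)^(m+3) = (2931/2000:ℝ)^m * ((2931/2000)^3) := by
        rw [pow_add]
      have hval : (narayana (m+3+2) : ℝ) = narayana (m+2+2) + narayana (m+2) := by
        show (narayana (m+2+3) : ℝ) = _
        rw [narayana]; push_cast; ring
      rw [hval, e3]
      rw [e2] at h1
      nlinarith [h1, h2, hp]

lemma pell_nonneg (k : ℕ) (P : ℤ → ℤ) (hk : 2 ≤ k) (hP : IsGenPell k P) :
    ∀ j : ℤ, 2 - (k:ℤ) ≤ j → 0 ≤ P j := by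
  obtain ⟨h0, h1, hr⟩ := hP
  suffices H : ∀ t : ℕ, 0 ≤ P (2 - (k:ℤ) + t) by
    intro j hj
    have := H (j - (2 - k)).toNat
    rwa [Int.toNat_of_nonneg (by omega),
      show 2 - (k:ℤ) + (j - (2-k)) = j by ring] at this
  intro t
  induction t using Nat.strong_induction_on with
  | _ t ih =>
    by_cases hle : 2 - (k:ℤ) + t ≤ 0
    · rw [h0 _ (by omega) hle]
    · by_cases h1' : 2 - (k:ℤ) + t = 1
      · rw [h1', h1]; norm_num
      · have hn2 : 2 ≤ 2 - (k:ℤ) + t := by omega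
        have ht : (k:ℤ) ≤ t := by omega
        rw [hr _ hn2]
        have hPn1 : 0 ≤ P (2 - (k:ℤ) + t - 1) := by
          have := ih (t-1) (by omega)
          rwa [show ((t-1:ℕ):ℤ) = (t:ℤ)-1 by omega,
            show 2-(k:ℤ)+((t:ℤ)-1) = 2 - (k:ℤ) + t - 1 by ring] at this
        have hsum : 0 ≤ ∑ i ∈ Finset.Icc 2 k, P (2 - (k:ℤ) + t - i) := by
          apply Finset.sum_nonneg
          intro i hi
          simp only [Finset.mem_Icc] at hi
          have := ih (t - i) (by omega)
          rwa [show ((t-i:ℕ):ℤ) = (t:ℤ)-i by omega,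
            show 2-(k:ℤ)+((t:ℤ)-(i:ℤ)) = 2 - (k:ℤ) + t - i by ring] at this
        linarith

lemma pell_two (k : ℕ) (P : ℤ → ℤ) (hk : 2 ≤ k) (hP : IsGenPell k P) : P 2 = 2 := by
  obtain ⟨h0, h1, hr⟩ := hP
  rw [hr 2 le_rfl, show (2:ℤ)-1 = 1 by ring, h1]
  rw [Finset.sum_eq_zero]
  · ring
  · intro i hi
    simp only [Finset.mem_Icc] at hi
    exact h0 _ (by omega) (by omega)

lemma pell_three (k : ℕ) (P : ℤ → ℤ) (hk : 2 ≤ k) (hP : IsGenPell k P) : P 3 = 5 := by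
  have h2 := pell_two k P hk hP
  obtain ⟨h0, h1, hr⟩ := hP
  rw [hr 3 (by norm_num), show (3:ℤ)-1 = 2 by ring, h2]
  rw [Finset.sum_eq_single_of_mem 2 (Finset.mem_Icc.mpr ⟨le_rfl, hk⟩)]
  · rw [show (3:ℤ)-(2:ℕ) = 1 by norm_num, h1]; norm_num
  · intro b hb hne
    simp only [Finset.mem_Icc] at hb
    exact h0 _ (by omega) (by omega)

lemma pell_lb (k : ℕ) (P : ℤ → ℤ) (hk : 2 ≤ k) (hP : IsGenPell k P) :
    ∀ t : ℕ, ((12:ℝ)/5)^t ≤ (P (2 + (t:ℤ)) : ℝ) := by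
  have hnn := pell_nonneg k P hk hP
  have h2 := pell_two k P hk hP
  have h3 := pell_three k P hk hP
  obtain ⟨h0, h1, hr⟩ := hP
  intro t
  induction t using Nat.strong_induction_on with
  | _ t ih =>
    match t with
    | 0 => norm_num [h2]
    | 1 => rw [show (2:ℤ) + ((1:ℕ):ℤ) = 3 by norm_num, h3]; norm_num
    | t+2 =>
      have hn2 : (2:ℤ) ≤ 2 + ((t:ℤ)+2) := by omega
      have hrec := hr (2 + ((t:ℤ)+2)) hn2
      have hsum : P (2 + ((t:ℤ)+2) - 2) ≤ ∑ i ∈ Finset.Icc 2 k, P (2 + ((t:ℤ)+2) - i) := by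
        have := Finset.single_le_sum (f := fun i : ℕ => P (2 + ((t:ℤ)+2) - i))
          (fun i hi => by
            simp only [Finset.mem_Icc] at hi
            exact hnn _ (by omega)) (Finset.mem_Icc.mpr ⟨le_rfl, hk⟩)
        simpa using this
      have hZ : 2 * P (2 + ((t:ℤ)+2) - 1) + P (2 + ((t:ℤ)+2) - 2) ≤ P (2 + ((t:ℤ)+2)) := by
        rw [hrec]; linarith
      have hR : 2 * (P (2 + ((t:ℤ)+2) - 1) : ℝ) + (P (2 + ((t:ℤ)+2) - 2) : ℝ)
          ≤ (P (2 + ((t:ℤ)+2)) : ℝ) := by exact_mod_cast hZ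
      have ih1 := ih (t+1) (by omega)
      have ih0 := ih t (by omega)
      rw [show (2:ℤ) + (((t:ℕ)+1:ℕ):ℤ) = 2 + ((t:ℤ)+2) - 1 by push_cast; ring] at ih1
      rw [show (2:ℤ) + ((t:ℕ):ℤ) = 2 + ((t:ℤ)+2) - 2 by push_cast; ring] at ih0
      have hx : (0:ℝ) < (12/5:ℝ)^t := by positivity
      have e1 : ((12:ℝ)/5)^(t+1) = (12/5:ℝ)^t * (12/5) := by rw [pow_succ]
      have e2 : ((12:ℝ)/5)^(t+2) = (12/5:ℝ)^t * (144/25) := by rw [pow_add]; norm_num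
      push_cast at hR ⊢
      rw [e2]
      rw [e1] at ih1
      linarith

lemma geo_sum (s : ℕ) :
    (∑ i ∈ Finset.Icc 2 s, ((2619:ℝ)/1000)^(s-i)) * (1619/1000)
      ≤ ((2619:ℝ)/1000)^(s-1) - 1 := by
  induction s using Nat.strong_induction_on with
  | _ s ih =>
    match s with
    | 0 => simp [Finset.Icc_eq_empty_of_lt]
    | 1 => simp
    | s+2 =>
      have step := ih (s+1) (by omega)
      have htop : ∑ i ∈ Finset.Icc 2 (s+2), ((2619:ℝ)/1000)^(s+2-i)
          = ∑ i ∈ Finset.Icc 2 (s+1), ((2619:ℝ)/1000)^(s+2-i) + 1 := by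
        rw [Finset.sum_Icc_succ_top (by omega : 2 ≤ s+2)]
        norm_num
      have hshift : ∑ i ∈ Finset.Icc 2 (s+1), ((2619:ℝ)/1000)^(s+2-i)
          = (2619/1000) * ∑ i ∈ Finset.Icc 2 (s+1), ((2619:ℝ)/1000)^(s+1-i) := by
        rw [Finset.mul_sum]
        apply Finset.sum_congr rfl
        intro i hi
        simp only [Finset.mem_Icc] at hi
        rw [show s+2-i = (s+1-i)+1 by omega, pow_succ]
        ring
      have hpow : ((2619:ℝ)/1000)^(s+2-1) = (2619/1000) * ((2619:ℝ)/1000)^(s+1-1) := by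
        rw [show s+2-1 = (s+1-1)+1 by omega, pow_succ]; ring
      rw [htop, hshift, hpow]
      nlinarith [step]

lemma pell_ub (k : ℕ) (P : ℤ → ℤ) (hk : 2 ≤ k) (hP : IsGenPell k P) :
    ∀ t : ℕ, (P (1 + (t:ℤ)) : ℝ) ≤ ((2619:ℝ)/1000)^t := by
  obtain ⟨h0, h1, hr⟩ := hP
  intro t
  induction t using Nat.strong_induction_on with
  | _ t ih =>
    match t with
    | 0 => rw [show (1:ℤ) + ((0:ℕ):ℤ) = 1 by norm_num, h1]; norm_num
    | t+1 =>
      have hn2 : (2:ℤ) ≤ 1 + ((t:ℤ)+1) := by omega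
      have hrec := hr (1 + ((t:ℤ)+1)) hn2
      have hrecR : (P (1 + ((t:ℤ)+1)) : ℝ)
          = 2 * (P (1 + ((t:ℤ)+1) - 1) : ℝ)
            + ∑ i ∈ Finset.Icc 2 k, (P (1 + ((t:ℤ)+1) - i) : ℝ) := by
        exact_mod_cast congrArg (Int.cast : ℤ → ℝ) hrec
      -- bound each summand
      have hterm : ∀ i ∈ Finset.Icc 2 k, (P (1 + ((t:ℤ)+1) - i) : ℝ)
          ≤ if i ≤ t+1 then ((2619:ℝ)/1000)^(t+1-i) else 0 := by
        intro i hi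
        simp only [Finset.mem_Icc] at hi
        by_cases hit : i ≤ t+1
        · rw [if_pos hit]
          have := ih (t+1-i) (by omega)
          rwa [show (1:ℤ) + ((t+1-i:ℕ):ℤ) = 1 + ((t:ℤ)+1) - i by omega] at this
        · rw [if_neg hit]
          rw [h0 _ (by omega) (by omega)]
          norm_num
      have hsum1 : ∑ i ∈ Finset.Icc 2 k, (P (1 + ((t:ℤ)+1) - i) : ℝ)
          ≤ ∑ i ∈ Finset.Icc 2 k, (if i ≤ t+1 then ((2619:ℝ)/1000)^(t+1-i) else 0) :=
        Finset.sum_le_sum hterm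
      have hsum2 : ∑ i ∈ Finset.Icc 2 k, (if i ≤ t+1 then ((2619:ℝ)/1000)^(t+1-i) else 0)
          ≤ ∑ i ∈ Finset.Icc 2 (t+1), ((2619:ℝ)/1000)^(t+1-i) := by
        rw [← Finset.sum_filter]
        apply Finset.sum_le_sum_of_subset_of_nonneg
        · intro i hi
          simp only [Finset.mem_filter, Finset.mem_Icc] at hi ⊢
          exact ⟨hi.1.1, hi.2⟩
        · intro i _ _
          positivity
      have hgeo := geo_sum (t+1)
      have ih1 := ih t (by omega)
      rw [show (1:ℤ) + ((t:ℕ):ℤ) = 1 + ((t:ℤ)+1) - 1 by push_cast; ring] at ih1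
      have hx : (0:ℝ) < (2619/1000:ℝ)^t := by positivity
      have e1 : ((2619:ℝ)/1000)^(t+1) = (2619/1000:ℝ)^t * (2619/1000) := by rw [pow_succ]
      have e0 : ((2619:ℝ)/1000)^(t+1-1) = (2619/1000:ℝ)^t := by norm_num
      rw [e0] at hgeo
      rw [show (1:ℤ) + ((t+1:ℕ):ℤ) = 1 + ((t:ℤ)+1) by push_cast; ring, hrecR, e1]
      nlinarith [hsum1, hsum2, hgeo, ih1, hx]

lemma exp_lemma : ∀ t : ℕ, 2 ≤ t → ((3:ℝ)/2)^(5*t+4) < ((12:ℝ)/5)^(4*t) := by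
  intro t ht
  induction t, ht using Nat.le_induction with
  | base => norm_num
  | succ t ht ih =>
    have e1 : ((3:ℝ)/2)^(5*(t+1)+4) = (3/2)^(5*t+4) * (3/2)^5 := by
      rw [show 5*(t+1)+4 = (5*t+4)+5 from by ring, pow_add]
    have e2 : ((12:ℝ)/5)^(4*(t+1)) = (12/5)^(4*t) * (12/5)^4 := by
      rw [show 4*(t+1) = 4*t+4 from by ring, pow_add]
    rw [e1, e2]
    have h2 : ((3:ℝ)/2)^5 < ((12:ℝ)/5)^4 := by norm_num
    exact mul_lt_mul'' ih h2 (by positivity) (by positivity)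

/-- If n ≥ k + 2, k ≥ 2, m ≥ 0 and P_n^(k) = N_m, then
1.25n − 1.5 < m < 2.52n − 0.52. -/
theorem genPell_eq_narayana_index_bounds (k : ℕ) (hk : 2 ≤ k) (P : ℤ → ℤ)
    (hP : IsGenPell k P) (n : ℤ) (hn : (k : ℤ) + 2 ≤ n) (m : ℕ)
    (h : P n = narayana m) :
    1.25 * (n : ℝ) - 1.5 < (m : ℝ) ∧ (m : ℝ) < 2.52 * (n : ℝ) - 0.52 := by
  set t : ℕ := (n - 2).toNat with htdef
  have hnt : n = 2 + (t:ℤ) := by omega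
  have ht2 : 2 ≤ t := by omega
  have A : ((12:ℝ)/5)^t ≤ (P n : ℝ) := by
    rw [hnt]; exact pell_lb k P hk hP t
  have B : (P n : ℝ) ≤ ((2619:ℝ)/1000)^(t+1) := by
    rw [hnt, show (2:ℤ)+(t:ℤ) = 1+((t+1:ℕ):ℤ) by push_cast; ring]
    exact pell_ub k P hk hP (t+1)
  have hNm : (P n : ℝ) = (narayana m : ℝ) := by exact_mod_cast congrArg (Int.cast : ℤ → ℝ) h
  constructor
  · -- lower bound
    have L1 : ((12:ℝ)/5)^t ≤ (3/2)^m := by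
      calc ((12:ℝ)/5)^t ≤ (P n : ℝ) := A
        _ = (narayana m : ℝ) := hNm
        _ ≤ (3/2)^m := nar_ub m
    have L2 : 5*t + 4 < 4*m := by
      by_contra hc
      push_neg at hc
      have e1 : ((12:ℝ)/5)^(4*t) ≤ (3/2)^(4*m) := by
        rw [show 4*t = t*4 by ring, show 4*m = m*4 by ring, pow_mul, pow_mul]
        exact pow_le_pow_left₀ (by positivity) L1 4
      have e2 : ((3:ℝ)/2)^(4*m) ≤ (3/2)^(5*t+4) :=
        pow_le_pow_right₀ (by norm_num) hc
      have := exp_lemma t ht2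
      linarith
    have hL : (5*(t:ℝ)+4) < 4*m := by exact_mod_cast L2
    rw [hnt]; push_cast; linarith
  · -- upper bound
    by_cases hm : m < 2
    · have ht2R : (2:ℝ) ≤ (t:ℝ) := by exact_mod_cast ht2
      interval_cases m <;> (rw [hnt]; push_cast; linarith)
    · push_neg at hm
      obtain ⟨m', rfl⟩ : ∃ m', m = m' + 2 := ⟨m-2, by omega⟩
      have U : ((2931:ℝ)/2000)^m' ≤ ((2619:ℝ)/1000)^(t+1) := by
        calc ((2931:ℝ)/2000)^m' ≤ (narayana (m'+2) : ℝ) := nar_lb m'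
          _ = (P n : ℝ) := hNm.symm
          _ ≤ ((2619:ℝ)/1000)^(t+1) := B
      have L3 : 100*m' ≤ 252*t + 251 := by
        by_contra hc
        push_neg at hc
        have e1 : ((2931:ℝ)/2000)^(252*(t+1)) ≤ ((2931:ℝ)/2000)^(100*m') :=
          pow_le_pow_right₀ (by norm_num) (by omega)
        have e2 : ((2931:ℝ)/2000)^(100*m') ≤ ((2619:ℝ)/1000)^(100*(t+1)) := by
          rw [show 100*m' = m'*100 by ring, show 100*(t+1) = (t+1)*100 by ring,
            pow_mul, pow_mul]
          exact pow_le_pow_left₀ (by positivity) U 100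
        have e3 : ((2619:ℝ)/1000)^(100*(t+1)) < ((2931:ℝ)/2000)^(252*(t+1)) := by
          rw [show 100*(t+1) = 100*(t+1) by ring, pow_mul, pow_mul]
          apply pow_lt_pow_left₀ (by norm_num) (by positivity)
          omega
        linarith
      have hLR : (100*(m':ℝ)) ≤ 252*t + 251 := by exact_mod_cast L3
      rw [hnt]; push_cast; linarith
end

section
/- Let α be the real root of x^3 − x^2 − 1 and β, δ the complex conjugate pair of roots. Then |β| = |δ| < 0.83, and for every m ≥ 1, |C_β β^{m+2} + C_δ δ^{m+2}| < 1/2, where C_x = 1/(x^3 + 2). -/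
set_option maxHeartbeats 1600000 in
/-- Let β, δ be the complex conjugate pair of (non-real) roots of x³ − x² − 1.
Then |β| = |δ| < 0.83 and |C_β β^{m+2} + C_δ δ^{m+2}| < 1/2 for all m ≥ 1,
where C_x = 1/(x³ + 2). -/
theorem narayana_complex_roots_small (β δ : ℂ)
    (hβ : β ^ 3 - β ^ 2 - 1 = 0) (hδ : δ ^ 3 - δ ^ 2 - 1 = 0)
    (hconj : δ = (starRingEnd ℂ) β) (hnonreal : β.im ≠ 0) :
    ‖β‖ = ‖δ‖ ∧ ‖β‖ < 0.83 ∧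
      ∀ m : ℕ, 1 ≤ m →
        ‖1 / (β ^ 3 + 2) * β ^ (m + 2) + 1 / (δ ^ 3 + 2) * δ ^ (m + 2)‖
          < 1 / 2 := by
  have hconj' : (starRingEnd ℂ) β ^ 3 - (starRingEnd ℂ) β ^ 2 - 1 = 0 := by
    have := congrArg (starRingEnd ℂ) hβ
    simpa [map_sub, map_pow, map_one] using this
  have hne : β ≠ (starRingEnd ℂ) β := by
    intro h
    exact hnonreal (Complex.conj_eq_iff_im.mp h.symm)
  set s : ℝ := 2 * β.re with hs_def
  set r : ℝ := Complex.normSq β with hr_def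
  have hac : β + (starRingEnd ℂ) β = (s : ℂ) := by
    rw [Complex.add_conj, hs_def]
  have hmc : β * (starRingEnd ℂ) β = (r : ℂ) := Complex.mul_conj β
  -- first symmetric equation: s^2 - r - s = 0
  have h1 : β ^ 2 + β * (starRingEnd ℂ) β + (starRingEnd ℂ) β ^ 2
      - (β + (starRingEnd ℂ) β) = 0 := by
    have hd : (β - (starRingEnd ℂ) β) * (β ^ 2 + β * (starRingEnd ℂ) β
        + (starRingEnd ℂ) β ^ 2 - (β + (starRingEnd ℂ) β)) = 0 := by
      linear_combination hβ - hconj'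
    rcases mul_eq_zero.mp hd with h | h
    · exact absurd (sub_eq_zero.mp h) hne
    · exact h
  have es : s ^ 2 - r - s = 0 := by
    have : ((s ^ 2 - r - s : ℝ) : ℂ) = 0 := by
      push_cast
      rw [← hac, ← hmc]
      linear_combination h1
    exact_mod_cast this
  -- second symmetric equation
  have h2 : β ^ 3 + (starRingEnd ℂ) β ^ 3 - (β ^ 2 + (starRingEnd ℂ) β ^ 2) - 2 = 0 := by
    linear_combination hβ + hconj'
  have er : s ^ 3 - 3 * r * s - s ^ 2 + 2 * r - 2 = 0 := by
    have : ((s ^ 3 - 3 * r * s - s ^ 2 + 2 * r - 2 : ℝ) : ℂ) = 0 := by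
      push_cast
      rw [← hac, ← hmc]
      linear_combination h2
    exact_mod_cast this
  have hr' : r = s ^ 2 - s := by linarith
  have hcube : s ^ 3 - 2 * s ^ 2 + s + 1 = 0 := by
    linear_combination (3 * s / 2 - 1) * es - er / 2
  -- bounds on s
  have hs1 : -0.466 < s := by nlinarith [sq_nonneg (s - 1.233), sq_nonneg (s + 0.466), sq_nonneg s]
  have hs2 : s < -0.46 := by nlinarith [sq_nonneg (s - 1.23), sq_nonneg (s + 0.46), sq_nonneg s]
  have hrub : r < 0.6889 := by nlinarith
  have hrlb : 0 < r := by nlinarith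
  set b : ℝ := ‖β‖ with hb_def
  have hb0 : 0 ≤ b := norm_nonneg β
  have hb2 : b ^ 2 = r := Complex.sq_norm β
  have hblt : b < 0.83 := by nlinarith
  -- norm-squared of β^3 + 2
  have eA : Complex.normSq (β ^ 3 + 2) = r ^ 2 + 3 * s ^ 2 - 6 * r + 9 := by
    have hc : ((Complex.normSq (β ^ 3 + 2) : ℝ) : ℂ)
        = ((r ^ 2 + 3 * s ^ 2 - 6 * r + 9 : ℝ) : ℂ) := by
      rw [← Complex.mul_conj]
      push_cast
      rw [← hac, ← hmc]
      simp only [map_add, map_pow, map_ofNat]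
      linear_combination ((starRingEnd ℂ) β ^ 3 + 2) * hβ + (β ^ 2 + 3) * hconj'
    exact_mod_cast hc
  set A : ℝ := ‖β ^ 3 + 2‖ with hA_def
  have hA0 : 0 ≤ A := norm_nonneg _
  have hA2 : A ^ 2 = r ^ 2 + 3 * s ^ 2 - 6 * r + 9 := by
    rw [hA_def, Complex.sq_norm]; exact eA
  have hApos : 0 < A := by nlinarith
  refine ⟨by rw [hconj]; exact (Complex.norm_conj β).symm, hblt, ?_⟩
  intro m hm
  have h2nd : 1 / (δ ^ 3 + 2) * δ ^ (m + 2)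
      = (starRingEnd ℂ) (1 / (β ^ 3 + 2) * β ^ (m + 2)) := by
    rw [hconj]
    simp [map_mul, map_div₀, map_pow, map_add, map_one, map_ofNat]
  rw [h2nd]
  have htri : ‖1 / (β ^ 3 + 2) * β ^ (m + 2)
      + (starRingEnd ℂ) (1 / (β ^ 3 + 2) * β ^ (m + 2))‖
      ≤ 2 * ‖1 / (β ^ 3 + 2) * β ^ (m + 2)‖ := by
    calc ‖1 / (β ^ 3 + 2) * β ^ (m + 2)
        + (starRingEnd ℂ) (1 / (β ^ 3 + 2) * β ^ (m + 2))‖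
        ≤ ‖1 / (β ^ 3 + 2) * β ^ (m + 2)‖
          + ‖(starRingEnd ℂ) (1 / (β ^ 3 + 2) * β ^ (m + 2))‖ :=
          norm_add_le _ _
      _ = 2 * ‖1 / (β ^ 3 + 2) * β ^ (m + 2)‖ := by
          rw [Complex.norm_conj]; ring
  have habsz : ‖1 / (β ^ 3 + 2) * β ^ (m + 2)‖ = (1 / A) * b ^ (m + 2) := by
    rw [norm_mul, norm_div, norm_pow, norm_one]
  have hb1 : b < 1 := by nlinarith
  have hpow : b ^ (m + 2) ≤ b ^ 3 := pow_le_pow_of_le_one hb0 hb1.le (by omega)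
  have hss : (0.2116 : ℝ) < s ^ 2 := by nlinarith
  have t1 : 16 * r ^ 3 ≤ 11.0224 * r ^ 2 := by
    nlinarith [mul_nonneg (mul_nonneg hrlb.le hrlb.le) (by linarith : (0:ℝ) ≤ 0.6889 - r)]
  have t2 : 10.0224 * r ^ 2 + 6 * r < 9.6348 := by
    nlinarith [mul_pos hrlb (by linarith : (0:ℝ) < 0.6889 - r)]
  have h16 : 16 * r ^ 3 < A ^ 2 := by
    rw [hA2]
    linarith
  have hb6 : (b ^ 3) ^ 2 = r ^ 3 := by rw [← hb2]; ring
  have hkey : 4 * b ^ 3 < A := by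
    nlinarith [pow_nonneg hb0 3, hApos, hb6, h16]
  have : 2 * ((1 / A) * b ^ (m + 2)) < 1 / 2 := by
    have h1 : 2 * ((1 / A) * b ^ (m + 2)) ≤ 2 * ((1 / A) * b ^ 3) := by
      have := one_div_pos.mpr hApos
      nlinarith
    have h2 : 2 * ((1 / A) * b ^ 3) < 1 / 2 := by
      rw [show 2 * ((1 / A) * b ^ 3) = (2 * b ^ 3) / A by ring,
        div_lt_div_iff₀ hApos (by norm_num : (0:ℝ) < 2)]
      linarith
    linarith
  calc ‖1 / (β ^ 3 + 2) * β ^ (m + 2)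
      + (starRingEnd ℂ) (1 / (β ^ 3 + 2) * β ^ (m + 2))‖
      ≤ 2 * ‖1 / (β ^ 3 + 2) * β ^ (m + 2)‖ := htri
    _ = 2 * ((1 / A) * b ^ (m + 2)) := by rw [habsz]
    _ < 1 / 2 := this
end

section
/- The minimal polynomial over ℤ of C_α = 1/(α^3 + 2), where α is the real root of x^3 − x^2 − 1, is 31x^3 − 31x^2 + 10x − 1, and all its roots lie strictly inside the unit circle. -/
open Polynomial

/-- No rational root of 31x³ − 31x² + 10x − 1. -/
lemma no_rat_root (r : ℚ) (h : 31 * r ^ 3 - 31 * r ^ 2 + 10 * r - 1 = 0) : False := by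
  have hr : (r.num : ℚ) = r * r.den := by
    exact_mod_cast (Rat.mul_den_eq_num r).symm
  have hint : 31 * r.num ^ 3 - 31 * r.num ^ 2 * r.den + 10 * r.num * r.den ^ 2
      - (r.den : ℤ) ^ 3 = 0 := by
    have hq : ((31 * r.num ^ 3 - 31 * r.num ^ 2 * r.den + 10 * r.num * r.den ^ 2
        - (r.den : ℤ) ^ 3 : ℤ) : ℚ) = 0 := by
      push_cast
      rw [hr]
      linear_combination ((r.den : ℚ)) ^ 3 * h
    exact_mod_cast hq
  set n := r.num with hn
  set d := (r.den : ℤ) with hdd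
  have hcop : IsCoprime n d := by
    rw [Int.isCoprime_iff_gcd_eq_one]
    exact_mod_cast r.reduced
  have hnd : n ∣ d ^ 3 := by
    refine ⟨31 * n ^ 2 - 31 * n * d + 10 * d ^ 2, ?_⟩
    linarith [hint]
  have hn1 : IsUnit n := (hcop.pow_right (n := 3)).isUnit_of_dvd' (dvd_refl n) hnd
  have hdn : d ∣ 31 * n ^ 3 := by
    refine ⟨31 * n ^ 2 - 10 * n * d + d ^ 2, ?_⟩
    linarith [hint]
  have hd31 : d ∣ 31 := (hcop.symm.pow_right (n := 3)).dvd_of_dvd_mul_right hdn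
  have hdpos : 0 < d := by rw [hdd]; exact_mod_cast r.pos
  have hdnat : d.natAbs ∣ 31 := by
    have := Int.natAbs_dvd_natAbs.mpr hd31; simpa using this
  have hp : Nat.Prime 31 := by norm_num
  have hdcases : d = 1 ∨ d = 31 := by
    rcases Nat.Prime.eq_one_or_self_of_dvd hp _ hdnat with h1 | h1 <;> omega
  have hncases : n = 1 ∨ n = -1 := Int.isUnit_iff.mp hn1
  rcases hncases with h1 | h1 <;> rcases hdcases with h2 | h2 <;>
    rw [h1, h2] at hint <;> norm_num at hint

/-- The minimal polynomial over ℤ of C_α = 1/(α³ + 2), where α is the real root of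
x³ − x² − 1, is 31x³ − 31x² + 10x − 1 (an irreducible primitive polynomial having
C_α as a root), and all of its (complex) roots lie strictly inside the unit circle. -/
theorem minpoly_C_alpha (α : ℝ) (hα : α ^ 3 - α ^ 2 - 1 = 0) :
    aeval (1 / (α ^ 3 + 2)) (31 * X ^ 3 - 31 * X ^ 2 + 10 * X - 1 : ℤ[X]) = 0 ∧
      Irreducible (31 * X ^ 3 - 31 * X ^ 2 + 10 * X - 1 : ℤ[X]) ∧
      (31 * X ^ 3 - 31 * X ^ 2 + 10 * X - 1 : ℤ[X]).IsPrimitive ∧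
      ∀ z : ℂ, aeval z (31 * X ^ 3 - 31 * X ^ 2 + 10 * X - 1 : ℤ[X]) = 0 →
        ‖z‖ < 1 := by
  set p : ℤ[X] := 31 * X ^ 3 - 31 * X ^ 2 + 10 * X - 1 with hp
  have hprim : p.IsPrimitive := by
    intro c hc
    have hcd : c ∣ p.coeff 0 := (Polynomial.C_dvd_iff_dvd_coeff c p).mp hc 0
    have h0 : p.coeff 0 = -1 := by simp [hp, coeff_one]
    rw [h0] at hcd
    exact isUnit_of_dvd_unit hcd (by simp)
  have haev : aeval (1 / (α ^ 3 + 2)) p = 0 := by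
    have hne : α ^ 3 + 2 ≠ 0 := by nlinarith [sq_nonneg α]
    simp only [hp, map_sub, map_add, map_mul, map_pow, map_ofNat, aeval_X, map_one]
    field_simp
    linear_combination (-1+α^2+2*α^3-α^4-α^5-α^6) * hα
  have hdeg : p.natDegree = 3 := by rw [hp]; compute_degree!
  have hirr : Irreducible p := by
    rw [Polynomial.IsPrimitive.Int.irreducible_iff_irreducible_map_cast hprim]
    have hmapdeg : (p.map (Int.castRingHom ℚ)).natDegree = 3 := by
      rw [natDegree_map_eq_of_injective (Int.cast_injective : Function.Injective ((Int.castRingHom ℚ) : ℤ → ℚ)) p, hdeg]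
    rw [Polynomial.irreducible_iff_roots_eq_zero_of_degree_le_three (by omega) (by omega)]
    rw [Multiset.eq_zero_iff_forall_notMem]
    intro r hr
    have hrr := isRoot_of_mem_roots hr
    have hre : 31 * r ^ 3 - 31 * r ^ 2 + 10 * r - 1 = 0 := by
      have h := hrr.eq_zero
      simp only [hp, eval_map, eval₂_sub, eval₂_add, eval₂_mul, eval₂_pow, eval₂_X,
        eval₂_one, eval₂_ofNat] at h
      linarith [h]
    exact no_rat_root r hre
  refine ⟨haev, hirr, hprim, ?_⟩
  intro z hz
  by_contra hzb
  push_neg at hzb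
  have hzeq : 31 * z ^ 3 - 31 * z ^ 2 + 10 * z - 1 = 0 := by
    simpa [hp, map_sub, map_add, map_mul, map_pow, map_ofNat] using hz
  have hz0 : z ≠ 0 := by
    intro h; rw [h] at hzeq; norm_num at hzeq
  have hwabs : ‖z⁻¹‖ ≤ 1 := by
    rw [norm_inv, inv_le_one_iff₀]
    right; exact hzb
  have hweq : z⁻¹ ^ 3 - 10 * z⁻¹ ^ 2 + 31 * z⁻¹ - 31 = 0 := by
    field_simp
    linear_combination (-1) * hzeq
  have hδeq : (1 - z⁻¹) ^ 3 + 7 * (1 - z⁻¹) ^ 2 + 14 * (1 - z⁻¹) + 9 = 0 := by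
    linear_combination -hweq
  set d : ℝ := ‖1 - z⁻¹‖ with hdd
  have hd0 : 0 ≤ d := norm_nonneg _
  have h31 : (31 : ℂ) * (1 - z⁻¹) = z⁻¹ ^ 2 * (z⁻¹ - 10) := by
    linear_combination -hweq
  have hub : 31 * d ≤ 11 := by
    have habs : ‖(31 : ℂ) * (1 - z⁻¹)‖ = ‖z⁻¹ ^ 2 * (z⁻¹ - 10)‖ := by
      rw [h31]
    rw [norm_mul, norm_mul, norm_pow] at habs
    have h1 : ‖z⁻¹ - 10‖ ≤ ‖z⁻¹‖ + 10 := by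
      calc ‖z⁻¹ - 10‖ ≤ ‖z⁻¹‖ + ‖(10 : ℂ)‖ :=
            norm_sub_le z⁻¹ 10
        _ = ‖z⁻¹‖ + 10 := by norm_num
    have h2 : ‖z⁻¹‖ ^ 2 * ‖z⁻¹ - 10‖ ≤ 1 * (1 + 10) := by
      apply mul_le_mul
      · nlinarith [norm_nonneg z⁻¹]
      · linarith
      · exact norm_nonneg _
      · norm_num
    have h31abs : ‖(31 : ℂ)‖ = 31 := by norm_num
    rw [h31abs] at habs
    rw [hdd]
    nlinarith [habs]
  have hlb : 9 ≤ 14 * d + 7 * d ^ 2 + d ^ 3 := by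
    have h9 : (9 : ℂ) = -(14 * (1 - z⁻¹)) - 7 * (1 - z⁻¹) ^ 2 - (1 - z⁻¹) ^ 3 := by
      linear_combination hδeq
    have h9' : (9 : ℝ) = ‖(9 : ℂ)‖ := by norm_num
    rw [h9', h9]
    calc ‖-(14 * (1 - z⁻¹)) - 7 * (1 - z⁻¹) ^ 2 - (1 - z⁻¹) ^ 3‖
        ≤ ‖-(14 * (1 - z⁻¹)) - 7 * (1 - z⁻¹) ^ 2‖
            + ‖(1 - z⁻¹) ^ 3‖ := norm_sub_le _ _
      _ ≤ ‖-(14 * (1 - z⁻¹))‖ + ‖7 * (1 - z⁻¹) ^ 2‖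
            + ‖(1 - z⁻¹) ^ 3‖ := by
          linarith [norm_sub_le (-(14 * (1 - z⁻¹))) (7 * (1 - z⁻¹) ^ 2)]
      _ = 14 * d + 7 * d ^ 2 + d ^ 3 := by
          rw [norm_neg, norm_mul, norm_mul, norm_pow, norm_pow]
          norm_num [hdd]
  nlinarith [hd0, hub, hlb, sq_nonneg d]
end

section
/- If m ≥ 1 is an integer, S ≥ (4m^2)^m, and x is a real number with x > e satisfying x/(log x)^m < S, then x < 2^m S (log S)^m. -/
/-- If m ≥ 1, S ≥ (4m²)^m and x > e satisfies x/(log x)^m < S, then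
x < 2^m · S · (log S)^m. -/
theorem sanchez_luca_bound (m : ℕ) (hm : 1 ≤ m) (S x : ℝ)
    (hS : ((4 * m ^ 2 : ℝ)) ^ m ≤ S) (hx : Real.exp 1 < x)
    (h : x / (Real.log x) ^ m < S) :
    x < 2 ^ m * S * (Real.log S) ^ m := by
  have hm1 : (1:ℝ) ≤ (m:ℝ) := by exact_mod_cast hm
  have hm0 : (0:ℝ) < (m:ℝ) := lt_of_lt_of_le one_pos hm1
  have hx0 : (0:ℝ) < x := lt_trans (Real.exp_pos 1) hx
  have hu1 : 1 < Real.log x := (Real.lt_log_iff_exp_lt hx0).2 hx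
  set u := Real.log x with hu
  have hu0 : (0:ℝ) < u := lt_trans one_pos hu1
  have hM0 : (0:ℝ) < 4 * (m:ℝ) ^ 2 := by positivity
  have hS0 : (0:ℝ) < S := lt_of_lt_of_le (pow_pos hM0 m) hS
  set L := Real.log S with hL
  set A := Real.log (4 * (m:ℝ) ^ 2) with hA
  have hlog2lt : Real.log 2 < 0.6931471808 := Real.log_two_lt_d9
  have hlog2gt : (0.6931471803:ℝ) < Real.log 2 := Real.log_two_gt_d9
  have hlog4 : Real.log 4 = 2 * Real.log 2 := by
    rw [show (4:ℝ) = 2^2 by norm_num, Real.log_pow]; push_cast; ring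
  have hA1 : 1 < A := by
    have h4A : Real.log 4 ≤ A := by
      apply Real.log_le_log (by norm_num)
      nlinarith [sq_nonneg ((m:ℝ) - 1)]
    rw [hlog4] at h4A; linarith
  have hA2m : A ≤ 2 * (m:ℝ) := by
    have hAeq : A = Real.log 4 + 2 * Real.log m := by
      rw [hA, show (4:ℝ) * (m:ℝ)^2 = 4 * (m:ℝ)^2 by ring,
        Real.log_mul (by norm_num) (by positivity), Real.log_pow]
      push_cast; ring
    have hlm : Real.log m ≤ (m:ℝ) - 1 := Real.log_le_sub_one_of_pos hm0
    rw [hAeq, hlog4]; linarith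
  have hLA : (m:ℝ) * A ≤ L := by
    have := Real.log_le_log (pow_pos hM0 m) hS
    rwa [Real.log_pow] at this
  have hx' : x < S * u ^ m := (div_lt_iff₀ (pow_pos hu0 m)).1 h
  have hlogx' : u < L + (m:ℝ) * Real.log u := by
    have h1 : u < Real.log (S * u ^ m) := Real.log_lt_log hx0 hx'
    rwa [Real.log_mul (ne_of_gt hS0) (by positivity), Real.log_pow] at h1
  have key : u ≤ 2 * L := by
    by_contra hcon
    push_neg at hcon
    set u0 : ℝ := 2 * (m:ℝ) * A with hu0def
    have hu0pos : 0 < u0 := by positivity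
    have huu0 : u0 ≤ u := by nlinarith
    have hlogu : Real.log u ≤ u / (2 * (m:ℝ)) := by
      have h1 : Real.log u - Real.log u0 ≤ (u - u0) / (2 * (m:ℝ)) := by
        have h2 : Real.log u - Real.log u0 = Real.log (u / u0) := by
          rw [Real.log_div (by positivity) (ne_of_gt hu0pos)]
        have h3 : Real.log (u / u0) ≤ u / u0 - 1 :=
          Real.log_le_sub_one_of_pos (by positivity)
        have h4 : u / u0 - 1 = (u - u0) / u0 := by field_simp
        have h5 : (u - u0) / u0 ≤ (u - u0) / (2 * (m:ℝ)) := by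
          apply div_le_div_of_nonneg_left (by linarith) (by positivity)
          nlinarith
        linarith [h2 ▸ (h3.trans (h4 ▸ h5))]
      have h6 : Real.log u0 ≤ A := by
        apply Real.log_le_log hu0pos
        nlinarith
      have h7 : u0 / (2 * (m:ℝ)) = A := by field_simp [hu0def]; exact hu0def
      have : Real.log u ≤ A + (u - u0) / (2 * (m:ℝ)) := by linarith
      have h8 : (u - u0) / (2 * (m:ℝ)) = u / (2 * (m:ℝ)) - A := by
        rw [sub_div, h7]
      linarith [h8 ▸ this]
    have : u < L + (m:ℝ) * (u / (2 * (m:ℝ))) := by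
      calc u < L + (m:ℝ) * Real.log u := hlogx'
        _ ≤ L + (m:ℝ) * (u / (2 * (m:ℝ))) := by
            gcongr
    have heq : (m:ℝ) * (u / (2 * (m:ℝ))) = u / 2 := by
      field_simp
    rw [heq] at this
    linarith
  have hL0 : 0 < L := by nlinarith
  have hpow : u ^ m ≤ (2 * L) ^ m := pow_le_pow_left₀ hu0.le key m
  calc x < S * u ^ m := hx'
    _ ≤ S * (2 * L) ^ m := by gcongr
    _ = 2 ^ m * S * L ^ m := by rw [mul_pow]; ring
end

section
/- For all integers k ≥ 2 and n ≥ 2 − k, the k-generalized Pell number satisfies |P_n^(k) − g_k(γ) γ^n| < 1/2, where γ = γ(k) is the dominant root and g_k(z) = (z−1)/((k+1)z^2 − 3kz + k − 1). -/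
set_option maxHeartbeats 1000000 in
/-- For k ≥ 2 and n ≥ 2 − k, |P_n^(k) − g_k(γ)γⁿ| < 1/2, where γ is the dominant
root and g_k(z) = (z−1)/((k+1)z² − 3kz + k − 1). -/
theorem genPell_dominant_term (k : ℕ) (hk : 2 ≤ k) (P : ℤ → ℤ) (hP : IsGenPell k P)
    (γ : ℝ) (hγ1 : 1 < γ) (hγ : Phi k γ = 0) (n : ℤ) (hn : 2 - (k : ℤ) ≤ n) :
    |(P n : ℝ) - (γ - 1) / ((k + 1) * γ ^ 2 - 3 * k * γ + k - 1) * γ ^ n| < 1 / 2 := by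
  classical
  open Finset in
  obtain ⟨K, rfl⟩ : ∃ K, k = K + 2 := ⟨k - 2, by omega⟩
  obtain ⟨hPzero, hPone, hPrec⟩ := hP
  have hγ0 : (0:ℝ) < γ := by linarith
  have hγne : γ ≠ 0 := ne_of_gt hγ0
  -- Φ in explicit form
  have hΦ : γ^(K+2) - 2*γ^(K+1) - ∑ i ∈ Finset.range (K+1), γ^i = 0 := by
    have h := hγ
    unfold Phi at h
    simpa using h
  -- γ > 2
  have hγ2 : 2 < γ := by
    by_contra hcon
    push_neg at hcon
    have h1 : γ^(K+2) - 2*γ^(K+1) ≤ 0 := by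
      have hp : γ^(K+2) = γ^(K+1) * γ := pow_succ γ (K+1)
      nlinarith [pow_pos hγ0 (K+1)]
    have h2 : (0:ℝ) < ∑ i ∈ Finset.range (K+1), γ^i := by
      refine Finset.sum_pos (fun i _ => pow_pos hγ0 i) ⟨0, by simp⟩
    linarith
  -- the key algebraic identity
  have key : γ^(K+1) * (γ^2 - 3*γ + 1) = -1 := by
    have hg := geom_sum_mul γ (K+1)
    have hp : γ^(K+2) = γ^(K+1) * γ := pow_succ γ (K+1)
    rw [hp] at hΦ
    linear_combination hg + (γ - 1) * hΦ
  have apos : 0 < γ^(K+1) := pow_pos hγ0 (K+1)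
  have ha2 : (2:ℝ)^(K+1) < γ^(K+1) := pow_lt_pow_left₀ hγ2 (by norm_num) (by omega)
  have hK2 : (2:ℝ)*((K:ℝ)+1) ≤ 2^(K+1) := by
    have h := Nat.lt_two_pow_self (n := K)
    have h1 : ((K:ℝ)+1) ≤ 2^K := by exact_mod_cast Nat.succ_le_of_lt h
    have h2 : (2:ℝ)^(K+1) = 2*2^K := by ring
    nlinarith
  have hKa : 2*((K:ℝ)+1) < γ^(K+1) := lt_of_le_of_lt hK2 ha2
  have hsneg : γ^2 - 3*γ + 1 < 0 := by nlinarith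
  have hγ3 : γ < 3 := by nlinarith
  -- the denominator D and the constant c
  set D := ((K:ℝ)+3)*γ^2 - 3*((K:ℝ)+2)*γ + ((K:ℝ)+1) with hD
  have hDa : γ^(K+1)*D = γ^(K+1)*(2*γ^2-3*γ) - ((K:ℝ)+1) := by
    rw [hD]; linear_combination ((K:ℝ)+1)*key
  have h23 : (0:ℝ) < 2*γ^2 - 3*γ - 2 := by nlinarith
  have hDpos : 0 < D := by nlinarith [mul_pos apos h23]
  set c := (γ-1)/D with hc
  have hcD : c*D = γ-1 := div_mul_cancel₀ _ (ne_of_gt hDpos)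
  have hcpos : 0 < c := div_pos (by linarith) hDpos
  -- c < 1/2
  have hx : γ^(K+1)*(D - 2*(γ-1)) = (γ^(K+1) - 1 - ((K:ℝ)+1)) + γ^(K+1)*(γ*(γ-2)) := by
    linear_combination hDa + key
  have hx2 : 0 < γ^(K+1)*(D - 2*(γ-1)) := by
    rw [hx]; nlinarith [mul_pos apos (mul_pos hγ0 (show (0:ℝ) < γ-2 by linarith))]
  have hD2 : 0 < D - 2*(γ-1) := by
    rcases mul_pos_iff.mp hx2 with ⟨_, h⟩ | ⟨h, _⟩
    · exact h
    · linarith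
  have hchalf : c < 1/2 := by
    rw [hc, div_lt_iff₀ hDpos]; linarith
  -- 1/2 < c*γ
  have hy : γ^(K+1)*(2*(γ*(γ-1)) - D) = γ^(K+1)*γ + ((K:ℝ)+1) := by linear_combination -hDa
  have hy2 : 0 < 2*(γ*(γ-1)) - D := by
    rcases mul_pos_iff.mp (show 0 < γ^(K+1)*(2*(γ*(γ-1)) - D) by
        rw [hy]; nlinarith [mul_pos apos hγ0]) with ⟨_, h⟩ | ⟨h, _⟩
    · exact h
    · linarith
  have hcγ1 : 1/2 < c*γ := by
    have hcc : c*γ = γ*(γ-1)/D := by rw [hc]; ring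
    rw [hcc, lt_div_iff₀ hDpos]; linarith
  -- c*γ < 3/2
  have hz3 : γ^(K+1)*(3*D - 2*(γ*(γ-1))) = γ^(K+1)*(4*γ^2 - 7*γ) - 3*((K:ℝ)+1) := by
    linear_combination 3*hDa
  have h47 : (0:ℝ) < 4*γ^2 - 7*γ - 2 := by nlinarith
  have hlt3 : 2*(γ*(γ-1)) < 3*D := by
    rcases mul_pos_iff.mp (show 0 < γ^(K+1)*(3*D - 2*(γ*(γ-1))) by
        rw [hz3]; nlinarith [mul_pos apos h47]) with ⟨_, h⟩ | ⟨h, _⟩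
    · linarith
    · linarith
  have hcγ3 : c*γ < 3/2 := by
    have hcc : c*γ = γ*(γ-1)/D := by rw [hc]; ring
    rw [hcc, div_lt_iff₀ hDpos]; linarith
  -- the bound M
  set M := max c |1 - c*γ| with hM
  have hMhalf : M < 1/2 := by
    refine max_lt hchalf (abs_lt.mpr ⟨by linarith, by linarith⟩)
  have hcM : c ≤ M := le_max_left _ _
  have hM0 : 0 < M := lt_of_lt_of_le hcpos hcM
  -- the P recurrence in range form
  have hPrec' : ∀ m : ℤ, 2 ≤ m →
      P m = 2 * P (m-1) + ∑ j ∈ Finset.range (K+1), P (m-2-(j:ℤ)) := by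
    intro m hm
    rw [hPrec m hm]
    congr 1
    rw [← Finset.Ico_add_one_right_eq_Icc, Finset.sum_Ico_eq_sum_range]
    have h1 : K + 2 + 1 - 2 = K + 1 := by omega
    rw [h1]
    refine Finset.sum_congr rfl fun j _ => ?_
    congr 1
    push_cast
    ring
  have hP2 : P 2 = 2 := by
    rw [hPrec' 2 (le_refl _), show (2:ℤ)-1 = 1 by norm_num, hPone]
    have h0 : ∑ j ∈ Finset.range (K+1), P (2-2-(j:ℤ)) = 0 := by
      refine Finset.sum_eq_zero fun j hj => ?_
      have hj' : j ≤ K := by simpa [Nat.lt_succ_iff] using hj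
      exact hPzero _ (by push_cast; omega) (by push_cast; omega)
    rw [h0]; norm_num
  -- the order-(k+1) recurrence for P
  have hP31 : ∀ m : ℤ, 2 ≤ m →
      P (m+1) = 3 * P m - P (m-1) - P (m+1-((K:ℤ)+3)) := by
    intro m hm
    have r1 := hPrec' (m+1) (by linarith)
    have r2 := hPrec' m hm
    have e1 : m + 1 - 1 = m := by ring
    rw [e1] at r1
    have tel := Finset.sum_range_sub' (f := fun j : ℕ => P (m+1-2-(j:ℤ))) (K+1)
    have tel2 : ∑ j ∈ Finset.range (K+1), (P (m+1-2-(j:ℤ)) - P (m-2-(j:ℤ)))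
        = P (m-1) - P (m+1-((K:ℤ)+3)) := by
      rw [show P (m-1) = P (m+1-2-((0:ℕ):ℤ)) by congr 1; push_cast; ring,
        show P (m+1-((K:ℤ)+3)) = P (m+1-2-((K+1:ℕ):ℤ)) by congr 1; push_cast; ring]
      rw [← tel]
      refine Finset.sum_congr rfl fun j _ => ?_
      rw [show P (m+1-2-((j+1:ℕ):ℤ)) = P (m-2-(j:ℤ)) by congr 1; push_cast; ring]
    rw [Finset.sum_sub_distrib] at tel2
    linarith [r1, r2, tel2]
  -- the zpow identity for γ
  have hzg : ∀ m : ℤ, γ^(m+1) - 3*γ^m + γ^(m-1) + γ^(m+1-((K:ℤ)+3)) = 0 := by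
    intro m
    have e1 : γ^(m-1) = γ^(m+1-((K:ℤ)+3)) * γ^(K+1) := by
      rw [← zpow_natCast γ (K+1), ← zpow_add₀ hγne]
      congr 1; push_cast; ring
    have e2 : γ^m = γ^(m-1) * γ := by
      rw [← zpow_add_one₀ hγne]; congr 1; ring
    have e3 : γ^(m+1) = γ^m * γ := by rw [← zpow_add_one₀ hγne]
    rw [e3, e2, e1]
    linear_combination (γ^(m+1-((K:ℤ)+3))) * key
  -- the error sequence E
  set E : ℤ → ℝ := fun m => (P m : ℝ) - c * γ^m with hE
  have hER1 : ∀ m : ℤ, 2 ≤ m →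
      E (m+1) = 3*E m - E (m-1) - E (m+1-((K:ℤ)+3)) := by
    intro m hm
    have h1 : ((P (m+1) : ℝ)) = 3*(P m : ℝ) - (P (m-1) : ℝ) - (P (m+1-((K:ℤ)+3)) : ℝ) := by
      exact_mod_cast hP31 m hm
    simp only [hE]
    linear_combination h1 - c * hzg m
  -- small-index values of E
  have hEzero : ∀ l : ℤ, -(K:ℤ) ≤ l → l ≤ 0 → E l = -(c * γ^l) := by
    intro l h1 h2
    have h0 : P l = 0 := hPzero l (by push_cast; omega) h2
    simp only [hE, h0, Int.cast_zero]
    ring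
  have hEone : E 1 = 1 - c*γ := by
    simp only [hE, hPone, zpow_one]
    norm_num
  -- H vanishes: the reduced recurrence
  have hHbase : E 2 + (γ-3)*E (2-1)
      + (γ^2-3*γ+1) * ∑ j ∈ Finset.range (K+1), γ^j * E ((2:ℤ)-2-(j:ℤ)) = 0 := by
    have hterm : ∀ j ∈ Finset.range (K+1), γ^j * E ((2:ℤ)-2-(j:ℤ)) = -c := by
      intro j hj
      have hj' : j ≤ K := by simpa [Nat.lt_succ_iff] using hj
      rw [hEzero ((2:ℤ)-2-(j:ℤ)) (by push_cast; omega) (by push_cast; omega)]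
      rw [← zpow_natCast γ j]
      rw [show γ^(j:ℤ) * -(c * γ^((2:ℤ)-2-(j:ℤ))) = -(c * (γ^(j:ℤ) * γ^((2:ℤ)-2-(j:ℤ)))) by ring,
        ← zpow_add₀ hγne]
      rw [show (j:ℤ) + ((2:ℤ)-2-(j:ℤ)) = 0 by ring, zpow_zero]
      ring
    have hsum : ∑ j ∈ Finset.range (K+1), γ^j * E ((2:ℤ)-2-(j:ℤ)) = ((K:ℝ)+1) * (-c) := by
      rw [Finset.sum_congr rfl hterm, Finset.sum_const, Finset.card_range, nsmul_eq_mul]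
      push_cast; ring
    have hE2 : E 2 = 2 - c*γ^2 := by
      simp only [hE]
      rw [hP2, show ((2:ℤ)) = ((2:ℕ):ℤ) by norm_num, zpow_natCast]
      norm_num
    rw [hsum, show (2:ℤ)-1 = 1 by norm_num, hEone, hE2]
    linear_combination -hcD
  have hHstep : ∀ m : ℤ, 2 ≤ m →
      (E m + (γ-3)*E (m-1)
        + (γ^2-3*γ+1) * ∑ j ∈ Finset.range (K+1), γ^j * E (m-2-(j:ℤ)) = 0) →
      (E (m+1) + (γ-3)*E (m+1-1)
        + (γ^2-3*γ+1) * ∑ j ∈ Finset.range (K+1), γ^j * E (m+1-2-(j:ℤ)) = 0) := by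
    intro m hm IH
    have hS : ∑ j ∈ Finset.range (K+1), γ^j * E (m+1-2-(j:ℤ))
        = γ * ∑ j ∈ Finset.range (K+1), γ^j * E (m-2-(j:ℤ))
          + E (m-1) - γ^(K+1) * E (m+1-((K:ℤ)+3)) := by
      have tel := Finset.sum_range_sub' (f := fun j : ℕ => γ^j * E (m+1-2-(j:ℤ))) (K+1)
      have h2 : ∑ j ∈ Finset.range (K+1), γ^(j+1) * E (m+1-2-((j+1:ℕ):ℤ))
          = γ * ∑ j ∈ Finset.range (K+1), γ^j * E (m-2-(j:ℤ)) := by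
        rw [Finset.mul_sum]
        refine Finset.sum_congr rfl fun j _ => ?_
        rw [show E (m+1-2-((j+1:ℕ):ℤ)) = E (m-2-(j:ℤ)) by congr 1; push_cast; ring, pow_succ]
        ring
      have h0 : γ^(0:ℕ) * E (m+1-2-((0:ℕ):ℤ)) = E (m-1) := by
        rw [show E (m+1-2-((0:ℕ):ℤ)) = E (m-1) by congr 1; push_cast; ring, pow_zero, one_mul]
      have hK1 : γ^(K+1) * E (m+1-2-((K+1:ℕ):ℤ)) = γ^(K+1) * E (m+1-((K:ℤ)+3)) := by
        rw [show E (m+1-2-((K+1:ℕ):ℤ)) = E (m+1-((K:ℤ)+3)) by congr 1; push_cast; ring]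
      rw [Finset.sum_sub_distrib, h2, h0, hK1] at tel
      linarith [tel]
    rw [show m+1-1 = m by ring, hS]
    linear_combination (hER1 m hm) + γ * IH - E (m+1-((K:ℤ)+3)) * key
  have hH : ∀ m : ℤ, 2 ≤ m →
      E m + (γ-3)*E (m-1) + (γ^2-3*γ+1) * ∑ j ∈ Finset.range (K+1), γ^j * E (m-2-(j:ℤ)) = 0 :=
    fun m hm => Int.le_induction hHbase hHstep m hm
  -- the convex-combination recurrence
  have hrec : ∀ m : ℤ, 2 ≤ m →
      E m = (3-γ)*E (m-1)
        + (-(γ^2-3*γ+1)) * ∑ j ∈ Finset.range (K+1), γ^j * E (m-2-(j:ℤ)) := by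
    intro m hm
    linear_combination hH m hm
  -- coefficients sum to 1
  have hcoef : (3-γ) + (-(γ^2-3*γ+1)) * ∑ i ∈ Finset.range (K+1), γ^i = 1 := by
    have hG := geom_sum_mul γ (K+1)
    have h0 : ((3-γ) + (-(γ^2-3*γ+1)) * (∑ i ∈ Finset.range (K+1), γ^i) - 1) * (γ-1) = 0 := by
      linear_combination (-(γ^2-3*γ+1))*hG - key
    rcases mul_eq_zero.mp h0 with h | h
    · linarith
    · linarith
  -- the base bound
  have hsmall : ∀ l : ℤ, -(K:ℤ) ≤ l → l ≤ 1 → |E l| ≤ M := by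
    intro l h1 h2
    rcases eq_or_lt_of_le h2 with h3 | h3
    · rw [h3, hEone]
      exact le_max_right _ _
    · have h4 : l ≤ 0 := by omega
      rw [hEzero l h1 h4, abs_neg,
        abs_of_pos (mul_pos hcpos (zpow_pos hγ0 l))]
      have h5 : γ^l ≤ 1 := zpow_le_one_of_nonpos₀ (le_of_lt hγ1) h4
      calc c * γ^l ≤ c * 1 := mul_le_mul_of_nonneg_left h5 hcpos.le
      _ = c := mul_one c
      _ ≤ M := hcM
  -- the inductive step bound
  have hstep : ∀ l : ℤ, 2 ≤ l → (∀ i : ℤ, -(K:ℤ) ≤ i → i < l → |E i| ≤ M) → |E l| ≤ M := by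
    intro l hl IH
    have hr := hrec l hl
    have hSb : |∑ j ∈ Finset.range (K+1), γ^j * E (l-2-(j:ℤ))|
        ≤ (∑ i ∈ Finset.range (K+1), γ^i) * M := by
      calc |∑ j ∈ Finset.range (K+1), γ^j * E (l-2-(j:ℤ))|
          ≤ ∑ j ∈ Finset.range (K+1), |γ^j * E (l-2-(j:ℤ))| :=
            Finset.abs_sum_le_sum_abs _ _
      _ ≤ ∑ j ∈ Finset.range (K+1), γ^j * M := by
            refine Finset.sum_le_sum fun j hj => ?_
            have hj' : j ≤ K := by simpa [Nat.lt_succ_iff] using hj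
            rw [abs_mul, abs_of_pos (pow_pos hγ0 j)]
            refine mul_le_mul_of_nonneg_left ?_ (pow_pos hγ0 j).le
            exact IH _ (by omega) (by omega)
      _ = (∑ i ∈ Finset.range (K+1), γ^i) * M := by rw [Finset.sum_mul]
    have h3γ : (0:ℝ) ≤ 3 - γ := by linarith
    have hs' : (0:ℝ) ≤ -(γ^2-3*γ+1) := by linarith
    have hE1b : |E (l-1)| ≤ M := IH _ (by omega) (by omega)
    calc |E l| = |(3-γ)*E (l-1)
        + (-(γ^2-3*γ+1)) * ∑ j ∈ Finset.range (K+1), γ^j * E (l-2-(j:ℤ))| := by rw [← hr]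
    _ ≤ (3-γ)*|E (l-1)|
        + (-(γ^2-3*γ+1)) * |∑ j ∈ Finset.range (K+1), γ^j * E (l-2-(j:ℤ))| := by
        refine (abs_add_le _ _).trans ?_
        rw [abs_mul, abs_mul, abs_of_nonneg h3γ, abs_of_nonneg hs']
    _ ≤ (3-γ)*M + (-(γ^2-3*γ+1)) * ((∑ i ∈ Finset.range (K+1), γ^i) * M) :=
        add_le_add (mul_le_mul_of_nonneg_left hE1b h3γ) (mul_le_mul_of_nonneg_left hSb hs')
    _ = M := by linear_combination M * hcoef
  -- the main induction
  have hind : ∀ m : ℕ, ∀ l : ℤ, -(K:ℤ) ≤ l → l ≤ -(K:ℤ) + m → |E l| ≤ M := by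
    intro m
    induction m with
    | zero => intro l h1 h2; exact hsmall l h1 (by omega)
    | succ m ih =>
      intro l h1 h2
      rcases le_or_gt l (-(K:ℤ)+m) with h | h
      · exact ih l h1 h
      · rcases le_or_gt l 1 with h4 | h4
        · exact hsmall l h1 h4
        · exact hstep l (by omega) (fun i hi1 hi2 => ih i hi1 (by omega))
  have hEn : |E n| ≤ M := hind (n + K).toNat n (by push_cast at hn ⊢; omega) (by omega)
  -- conclude
  have hden : ((↑(K+2):ℝ) + 1) * γ^2 - 3*(↑(K+2):ℝ)*γ + (↑(K+2):ℝ) - 1 = D := by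
    rw [hD]; push_cast; ring
  calc |(P n : ℝ) - (γ - 1) / ((↑(K+2) + 1) * γ ^ 2 - 3 * ↑(K+2) * γ + ↑(K+2) - 1) * γ ^ n|
      = |E n| := by rw [hden, ← hc]
  _ ≤ M := hEn
  _ < 1/2 := hMhalf
end
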